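/- arXiv:2409.03486 — 3 statements merged into one kernel-verified Lean document; each statement's English description precedes it below -/
import Mathlib

section
/- Suppose the period τ is even. Then the total infrastructural distance over one period satisfies Σ_{i=1}^{τ} (1/2)·ln((√N + P_i)/(√N − P_i)) = ln(p_{τ−1} + q_{τ−1}√N), and the half-period distance satisfies Σ_{i=1}^{τ/2} (1/2)·ln((√N + P_i)/(√N − P_i)) = (1/2)·ln(p_{τ−1} + q_{τ−1}√N). -/
set_option maxHeartbeats 1000000


theorem stmt_17
    (N : ℕ) (hN : 0 < N) (hNsq : ¬ IsSquare N)
    (a P Q : ℤ → ℤ)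
    (hP0 : P 0 = 0) (hQ0 : Q 0 = 1)
    (ha : ∀ m : ℤ, 0 ≤ m → a m = ⌊((P m : ℝ) + Real.sqrt N) / (Q m : ℝ)⌋)
    (hPrec : ∀ m : ℤ, 0 ≤ m → P (m + 1) = a m * Q m - P m)
    (hQrec : ∀ m : ℤ, 0 ≤ m → Q (m + 1) * Q m = (N : ℤ) - P (m + 1) ^ 2)
    (τ : ℕ) (hτ : 0 < τ)
    (hper : ∀ n : ℤ, 1 ≤ n → a (n + τ) = a n)
    (hmin : ∀ τ' : ℕ, 0 < τ' → (∀ n : ℤ, 1 ≤ n → a (n + τ') = a n) → τ ≤ τ')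
    (p q : ℤ → ℤ)
    (hp1 : p (-1) = 1) (hp0 : p 0 = a 0)
    (hq1 : q (-1) = 0) (hq0 : q 0 = 1)
    (hprec : ∀ m : ℤ, 1 ≤ m → p m = a m * p (m - 1) + p (m - 2))
    (hqrec : ∀ m : ℤ, 1 ≤ m → q m = a m * q (m - 1) + q (m - 2))
    (hτeven : Even τ)
    :
    (∑ i ∈ Finset.range τ,
        (1 / 2 : ℝ) * Real.log ((Real.sqrt N + (P ((i : ℤ) + 1) : ℝ))
          / (Real.sqrt N - (P ((i : ℤ) + 1) : ℝ))))
        = Real.log ((p ((τ : ℤ) - 1) : ℝ) + (q ((τ : ℤ) - 1) : ℝ) * Real.sqrt N)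
      ∧ (∑ i ∈ Finset.range (τ / 2),
        (1 / 2 : ℝ) * Real.log ((Real.sqrt N + (P ((i : ℤ) + 1) : ℝ))
          / (Real.sqrt N - (P ((i : ℤ) + 1) : ℝ))))
        = (1 / 2 : ℝ) * Real.log ((p ((τ : ℤ) - 1) : ℝ) + (q ((τ : ℤ) - 1) : ℝ) * Real.sqrt N) := by
  set s : ℝ := Real.sqrt N with hs_def
  -- basic facts about s
  have hN2 : 2 ≤ N := by
    by_contra h
    interval_cases N
    · exact hNsq ⟨1, rfl⟩
  have hs_irr : Irrational s := irrational_sqrt_natCast_iff.mpr hNsq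
  have hsq : s ^ 2 = (N : ℝ) := Real.sq_sqrt (by positivity)
  have hs_pos : 0 < s := Real.sqrt_pos.mpr (by exact_mod_cast hN)
  have hN2' : (2 : ℝ) ≤ (N : ℝ) := by exact_mod_cast hN2
  have hs1 : 1 < s := by nlinarith [hsq, hs_pos, hN2']
  have hlin : ∀ c d : ℤ, (c : ℝ) + (d : ℝ) * s = 0 → c = 0 ∧ d = 0 := by
    intro c d h
    have hd : d = 0 := by
      by_contra hd
      apply hs_irr
      refine ⟨(-c / d : ℚ), ?_⟩
      have hd' : (d : ℝ) ≠ 0 := Int.cast_ne_zero.mpr hd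
      push_cast
      field_simp
      linarith
    subst hd
    push_cast at h
    refine ⟨by exact_mod_cast (by linarith : (c : ℝ) = 0), rfl⟩
  -- floor window: for Q m > 0, a m * Q m < P m + s < a m * Q m + Q m
  have hfl : ∀ m : ℤ, 0 ≤ m → 0 < Q m →
      ((a m : ℝ) * Q m < (P m : ℝ) + s ∧ (P m : ℝ) + s < (a m : ℝ) * Q m + Q m) := by
    intro m hm hQ
    have hQR : (0 : ℝ) < (Q m : ℝ) := by exact_mod_cast hQ
    have ham := ha m hm
    have h1 : (a m : ℝ) ≤ ((P m : ℝ) + s) / (Q m : ℝ) := by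
      rw [ham]; exact_mod_cast Int.floor_le _
    have h2 : ((P m : ℝ) + s) / (Q m : ℝ) < (a m : ℝ) + 1 := by
      have := Int.lt_floor_add_one (((P m : ℝ) + s) / (Q m : ℝ))
      rw [← ham] at this
      exact_mod_cast this
    have h1' : (a m : ℝ) ≠ ((P m : ℝ) + s) / (Q m : ℝ) := by
      intro heq
      have : (P m : ℝ) + s = (a m : ℝ) * Q m := by
        field_simp at heq; linarith
      exact absurd (hlin (P m - a m * Q m) 1 (by push_cast; linarith)).2 one_ne_zero
    have h1'' : (a m : ℝ) < ((P m : ℝ) + s) / (Q m : ℝ) := lt_of_le_of_ne h1 h1'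
    constructor
    · calc (a m : ℝ) * Q m < (((P m : ℝ) + s) / (Q m : ℝ)) * Q m := by
            exact mul_lt_mul_of_pos_right h1'' hQR
        _ = (P m : ℝ) + s := by field_simp
    · calc (P m : ℝ) + s = (((P m : ℝ) + s) / (Q m : ℝ)) * Q m := by field_simp
        _ < ((a m : ℝ) + 1) * Q m := mul_lt_mul_of_pos_right h2 hQR
        _ = (a m : ℝ) * Q m + Q m := by ring
  -- Q (m+1) is never zero
  have hQne : ∀ m : ℤ, 0 ≤ m → Q (m + 1) ≠ 0 := by
    intro m hm h0
    apply hNsq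
    have hq := hQrec m hm
    rw [h0, zero_mul] at hq
    have h2 : P (m + 1) ^ 2 = (N : ℤ) := by linarith
    have h3 : ((P (m + 1)).natAbs : ℤ) ^ 2 = (N : ℤ) := by rw [Int.natAbs_sq]; exact h2
    have h4 : (P (m + 1)).natAbs ^ 2 = N := by exact_mod_cast h3
    exact ⟨(P (m + 1)).natAbs, by rw [← h4]; ring⟩
  -- one step of reducedness
  have hstep : ∀ m : ℤ, 0 ≤ m → 0 < Q m → (P m : ℝ) < s → 1 ≤ a m →
      (0 < Q (m + 1) ∧ 0 < P (m + 1) ∧ (P (m + 1) : ℝ) < s ∧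
        s < (P (m + 1) : ℝ) + (Q (m + 1) : ℝ) ∧ (Q (m + 1) : ℝ) - (P (m + 1) : ℝ) < s) := by
    intro m hm hQ hP ha1
    obtain ⟨hf1, hf2⟩ := hfl m hm hQ
    have hQR : (0 : ℝ) < (Q m : ℝ) := by exact_mod_cast hQ
    have hP1 : ((P (m + 1) : ℝ)) = (a m : ℝ) * Q m - P m := by exact_mod_cast hPrec m hm
    have hα1 : (0 : ℝ) < s - (P (m + 1) : ℝ) := by rw [hP1]; linarith
    have hα2 : s - (P (m + 1) : ℝ) < (Q m : ℝ) := by rw [hP1]; linarith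
    have hPlt : (P (m + 1) : ℝ) < s := by linarith
    have hQ1ne : Q (m + 1) ≠ 0 := hQne m hm
    have hQ1neR : ((Q (m + 1) : ℝ)) ≠ 0 := Int.cast_ne_zero.mpr hQ1ne
    have hQQ : ((Q (m + 1) : ℝ)) * (Q m : ℝ) = (N : ℝ) - (P (m + 1) : ℝ) ^ 2 := by
      exact_mod_cast hQrec m hm
    -- beta relation
    set B : ℝ := ((P m : ℝ) - s) / (Q m : ℝ) - (a m : ℝ) with hB_def
    have hBlt : B < -1 := by
      have : ((P m : ℝ) - s) / (Q m : ℝ) < 0 := div_neg_of_neg_of_pos (by linarith) hQR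
      have ha1R : (1 : ℝ) ≤ (a m : ℝ) := by exact_mod_cast ha1
      rw [hB_def]; linarith
    have hnum : ((P (m + 1) : ℝ) - s) * ((P m : ℝ) - s - (a m : ℝ) * (Q m : ℝ))
        = (Q (m + 1) : ℝ) * (Q m : ℝ) := by
      linear_combination hsq - hQQ + ((P (m + 1) : ℝ) - s) * hP1
    have hbeta : (((P (m + 1) : ℝ)) - s) / (Q (m + 1) : ℝ) * B = 1 := by
      rw [hB_def]
      field_simp
      linear_combination hnum
    set β : ℝ := ((P (m + 1) : ℝ) - s) / (Q (m + 1) : ℝ) with hβ_def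
    have hβneg : β < 0 := by nlinarith [hbeta, hBlt]
    have hβgt : -1 < β := by nlinarith [hbeta, hBlt]
    have hQ1pos : 0 < Q (m + 1) := by
      rcases lt_trichotomy (Q (m + 1)) 0 with h | h | h
      · exfalso
        have hQR1 : ((Q (m + 1) : ℝ)) < 0 := by exact_mod_cast h
        have : 0 < β := div_pos_of_neg_of_neg (by linarith) hQR1
        linarith
      · exact absurd h hQ1ne
      · exact h
    have hQ1R : (0 : ℝ) < (Q (m + 1) : ℝ) := by exact_mod_cast hQ1pos
    have hβ' : (P (m + 1) : ℝ) - s > -(Q (m + 1) : ℝ) := by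
      have := (lt_div_iff₀ hQ1R).mp hβgt
      linarith
    have hsum : s < (P (m + 1) : ℝ) + (Q (m + 1) : ℝ) := by linarith
    have halpha : (Q (m + 1) : ℝ) - (P (m + 1) : ℝ) < s := by
      have h5 : (s - (P (m + 1) : ℝ)) * (s + (P (m + 1) : ℝ)) = (Q (m + 1) : ℝ) * (Q m : ℝ) := by
        linear_combination hsq - hQQ
      have h6 : (s - (P (m + 1) : ℝ)) * (Q (m + 1) : ℝ) < (s - (P (m + 1) : ℝ)) * (s + (P (m + 1) : ℝ)) := by
        rw [h5]
        calc (s - (P (m + 1) : ℝ)) * (Q (m + 1) : ℝ) < (Q m : ℝ) * (Q (m + 1) : ℝ) :=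
              mul_lt_mul_of_pos_right hα2 hQ1R
          _ = (Q (m + 1) : ℝ) * (Q m : ℝ) := by ring
      have h7 := lt_of_mul_lt_mul_left h6 (le_of_lt hα1)
      linarith
    have hPpos : 0 < P (m + 1) := by
      have : (0 : ℝ) < (P (m + 1) : ℝ) := by linarith
      exact_mod_cast this
    exact ⟨hQ1pos, hPpos, hPlt, hsum, halpha⟩
  have hQ0pos : 0 < Q 0 := by rw [hQ0]; norm_num
  have hP0R : (P 0 : ℝ) = 0 := by rw [hP0]; norm_num
  have ha0 : 1 ≤ a 0 := by
    obtain ⟨h1, h2⟩ := hfl 0 le_rfl hQ0pos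
    rw [hP0, hQ0] at h1 h2
    push_cast at h1 h2
    have : (0 : ℝ) < (a 0 : ℝ) := by linarith
    exact_mod_cast this
  have hred : ∀ m : ℤ, 1 ≤ m → (0 < Q m ∧ 0 < P m ∧ (P m : ℝ) < s ∧
      s < (P m : ℝ) + (Q m : ℝ) ∧ (Q m : ℝ) - (P m : ℝ) < s) := by
    refine fun m hm => Int.le_induction
      (motive := fun k _ => 0 < Q k ∧ 0 < P k ∧ (P k : ℝ) < s ∧
        s < (P k : ℝ) + (Q k : ℝ) ∧ (Q k : ℝ) - (P k : ℝ) < s) ?_ ?_ m hm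
    · exact hstep 0 le_rfl hQ0pos (by rw [hP0]; exact_mod_cast hs_pos) ha0
    · intro n hn ih
      obtain ⟨hQn, hPn, hPlt, hsum, hdiff⟩ := ih
      have hQR : (0 : ℝ) < (Q n : ℝ) := by exact_mod_cast hQn
      obtain ⟨hw1, hw2⟩ := hfl n (by linarith) hQn
      have han : 1 ≤ a n := by
        have h1 : (0 : ℝ) < (a n : ℝ) * Q n := by linarith
        have h2 : (0 : ℝ) < (a n : ℝ) := by nlinarith
        exact_mod_cast h2
      exact hstep n (by linarith) hQn hPlt han
  have ham : ∀ m : ℤ, 0 ≤ m → 1 ≤ a m := by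
    intro m hm
    rcases eq_or_lt_of_le hm with h | h
    · rw [← h]; exact ha0
    · have hm1 : 1 ≤ m := h
      obtain ⟨hQn, hPn, hPlt, hsum, hdiff⟩ := hred m hm1
      have hQR : (0 : ℝ) < (Q m : ℝ) := by exact_mod_cast hQn
      obtain ⟨hw1, hw2⟩ := hfl m hm hQn
      have h1 : (0 : ℝ) < (a m : ℝ) * Q m := by linarith
      have h2 : (0 : ℝ) < (a m : ℝ) := by nlinarith
      exact_mod_cast h2
  have hQpos : ∀ m : ℤ, 0 ≤ m → 0 < Q m := by
    intro m hm
    rcases eq_or_lt_of_le hm with h | h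
    · rw [← h]; exact hQ0pos
    · exact (hred m h).1
  -- fundamental identity: t*(q_{m-1}(P_m+t) + q_{m-2}Q_m) = p_{m-1}(P_m+t) + p_{m-2}Q_m
  have hE : ∀ t : ℝ, t ^ 2 = (N : ℝ) → ∀ m : ℤ, 1 ≤ m →
      t * ((q (m - 1) : ℝ) * ((P m : ℝ) + t) + (q (m - 2) : ℝ) * (Q m : ℝ))
        = (p (m - 1) : ℝ) * ((P m : ℝ) + t) + (p (m - 2) : ℝ) * (Q m : ℝ) := by
    intro t ht
    refine fun m hm => Int.le_induction
      (motive := fun k _ => t * ((q (k - 1) : ℝ) * ((P k : ℝ) + t) + (q (k - 2) : ℝ) * (Q k : ℝ))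
        = (p (k - 1) : ℝ) * ((P k : ℝ) + t) + (p (k - 2) : ℝ) * (Q k : ℝ)) ?_ ?_ m hm
    · simp only [show (1 : ℤ) - 1 = 0 by norm_num, show (1 : ℤ) - 2 = -1 by norm_num]
      have hP1 : P 1 = a 0 := by
        have := hPrec 0 le_rfl; rw [hP0, hQ0] at this; simpa using this
      have hQ1 : Q 1 = (N : ℤ) - a 0 ^ 2 := by
        have := hQrec 0 le_rfl; rw [hQ0] at this; rw [zero_add, hP1] at this; simpa using this
      rw [hq0, hq1, hp0, hp1, hP1, hQ1]
      push_cast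
      linear_combination ht
    · intro n hn IH
      have h0n : (0 : ℤ) ≤ n := by linarith
      have hQmne : ((Q n : ℝ)) ≠ 0 := ne_of_gt (by exact_mod_cast hQpos n h0n)
      have hP1' : ((P (n + 1) : ℝ)) = (a n : ℝ) * (Q n : ℝ) - (P n : ℝ) := by
        exact_mod_cast hPrec n h0n
      have hQQ' : ((Q (n + 1) : ℝ)) * (Q n : ℝ) = (N : ℝ) - (P (n + 1) : ℝ) ^ 2 := by
        exact_mod_cast hQrec n h0n
      have hp' : ((p n : ℝ)) = (a n : ℝ) * (p (n - 1) : ℝ) + (p (n - 2) : ℝ) := by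
        exact_mod_cast hprec n hn
      have hq' : ((q n : ℝ)) = (a n : ℝ) * (q (n - 1) : ℝ) + (q (n - 2) : ℝ) := by
        exact_mod_cast hqrec n hn
      have hkey : (Q n : ℝ) * (t * ((q n : ℝ) * ((P (n + 1) : ℝ) + t) + (q (n - 1) : ℝ) * (Q (n + 1) : ℝ)))
          = (Q n : ℝ) * ((p n : ℝ) * ((P (n + 1) : ℝ) + t) + (p (n - 1) : ℝ) * (Q (n + 1) : ℝ)) := by
        linear_combination ((P (n + 1) : ℝ) + t) * IH
          + (t * (q (n - 1) : ℝ) - (p (n - 1) : ℝ)) * hQQ'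
          - (t * (q (n - 1) : ℝ) - (p (n - 1) : ℝ)) * ht
          - (t * (q (n - 1) : ℝ) - (p (n - 1) : ℝ)) * ((P (n + 1) : ℝ) + t) * hP1'
          + ((P (n + 1) : ℝ) + t) * (Q n : ℝ) * t * hq'
          - ((P (n + 1) : ℝ) + t) * (Q n : ℝ) * hp'
      have hres := mul_left_cancel₀ hQmne hkey
      simpa [show n + 1 - 1 = n from by ring, show n + 1 - 2 = n - 1 from by ring] using hres
  -- positivity of convergents
  have hpq : ∀ m : ℤ, 0 ≤ m → (1 ≤ p m ∧ 1 ≤ q m ∧ 0 ≤ p (m - 1) ∧ 0 ≤ q (m - 1)) := by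
    refine fun m hm => Int.le_induction
      (motive := fun k _ => 1 ≤ p k ∧ 1 ≤ q k ∧ 0 ≤ p (k - 1) ∧ 0 ≤ q (k - 1)) ?_ ?_ m hm
    · simp only [show (0 : ℤ) - 1 = -1 by norm_num, hp1, hq1, hp0, hq0]
      exact ⟨ha0, le_refl 1, by norm_num, by norm_num⟩
    · intro n hn IH
      obtain ⟨hpn, hqn, hpn1, hqn1⟩ := IH
      have han1 : 1 ≤ a (n + 1) := ham (n + 1) (by linarith)
      have hp' := hprec (n + 1) (by linarith)
      have hq' := hqrec (n + 1) (by linarith)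
      rw [show n + 1 - 1 = n from by ring, show n + 1 - 2 = n - 1 from by ring] at hp' hq'
      refine ⟨?_, ?_, by simpa [show n + 1 - 1 = n from by ring] using (by linarith : (0:ℤ) ≤ p n),
        by simpa [show n + 1 - 1 = n from by ring] using (by linarith : (0:ℤ) ≤ q n)⟩
      · rw [hp']; nlinarith
      · rw [hq']; nlinarith
  -- product formula
  have hF : ∀ k : ℕ,
      (∏ i ∈ Finset.range k, ((s + (P ((i : ℤ) + 1) : ℝ)) / (s - (P ((i : ℤ) + 1) : ℝ))))
          * ((p ((k : ℤ) - 1) : ℝ) - (q ((k : ℤ) - 1) : ℝ) * s)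
        = (-1) ^ k * ((p ((k : ℤ) - 1) : ℝ) + (q ((k : ℤ) - 1) : ℝ) * s) := by
    intro k
    induction k with
    | zero =>
      simp only [Finset.range_zero, Finset.prod_empty, Nat.cast_zero, pow_zero]
      rw [show (0 : ℤ) - 1 = -1 by norm_num, hp1, hq1]
      norm_num
    | succ k IH =>
      have hk1 : (1 : ℤ) ≤ (k : ℤ) + 1 := by omega
      have E1 := hE s hsq ((k : ℤ) + 1) hk1
      have E2 := hE (-s) (by rw [neg_pow]; simp [hsq]) ((k : ℤ) + 1) hk1
      rw [show (k : ℤ) + 1 - 1 = (k : ℤ) from by ring,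
        show (k : ℤ) + 1 - 2 = (k : ℤ) - 1 from by ring] at E1 E2
      obtain ⟨hQ1, hP1, hPlt, hsum, hdiff⟩ := hred ((k : ℤ) + 1) hk1
      have hP1R : (0 : ℝ) < (P ((k : ℤ) + 1) : ℝ) := by exact_mod_cast hP1
      have hsub : (0 : ℝ) < s - (P ((k : ℤ) + 1) : ℝ) := by linarith
      have hne : s - (P ((k : ℤ) + 1) : ℝ) ≠ 0 := ne_of_gt hsub
      rw [Finset.prod_range_succ]
      push_cast
      rw [show (k : ℤ) + 1 - 1 = (k : ℤ) from by ring]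
      rw [show (∏ i ∈ Finset.range k, ((s + (P ((i : ℤ) + 1) : ℝ)) / (s - (P ((i : ℤ) + 1) : ℝ))))
            * ((s + (P ((k : ℤ) + 1) : ℝ)) / (s - (P ((k : ℤ) + 1) : ℝ)))
            * ((p (k : ℤ) : ℝ) - (q (k : ℤ) : ℝ) * s)
          = (∏ i ∈ Finset.range k, ((s + (P ((i : ℤ) + 1) : ℝ)) / (s - (P ((i : ℤ) + 1) : ℝ))))
            * (s + (P ((k : ℤ) + 1) : ℝ)) * ((p (k : ℤ) : ℝ) - (q (k : ℤ) : ℝ) * s)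
            / (s - (P ((k : ℤ) + 1) : ℝ)) from by ring]
      rw [div_eq_iff hne]
      linear_combination (-(∏ i ∈ Finset.range k, ((s + (P ((i : ℤ) + 1) : ℝ)) / (s - (P ((i : ℤ) + 1) : ℝ))))) * E1
        - (Q ((k : ℤ) + 1) : ℝ) * IH + ((-1 : ℝ)) ^ k * E2
  -- norm identity
  have hG : ∀ k : ℕ, ((p ((k : ℤ) - 1) : ℝ) ^ 2 - (N : ℝ) * ((q ((k : ℤ) - 1) : ℝ)) ^ 2)
      = (-1) ^ k * ((Q (k : ℤ)) : ℝ) := by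
    intro k
    induction k with
    | zero =>
      rw [show ((0 : ℕ) : ℤ) - 1 = -1 by norm_num, hp1, hq1]
      rw [show ((0 : ℕ) : ℤ) = (0 : ℤ) by norm_num, hQ0]
      norm_num
    | succ k IH =>
      have hk1 : (1 : ℤ) ≤ (k : ℤ) + 1 := by omega
      have h0k : (0 : ℤ) ≤ (k : ℤ) := by omega
      have E1 := hE s hsq ((k : ℤ) + 1) hk1
      have E2 := hE (-s) (by rw [neg_pow]; simp [hsq]) ((k : ℤ) + 1) hk1
      rw [show (k : ℤ) + 1 - 1 = (k : ℤ) from by ring,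
        show (k : ℤ) + 1 - 2 = (k : ℤ) - 1 from by ring] at E1 E2
      have e1 : ((P ((k : ℤ) + 1) : ℝ) + s) * ((p (k : ℤ) : ℝ) - s * (q (k : ℤ) : ℝ))
          = (Q ((k : ℤ) + 1) : ℝ) * (s * (q ((k : ℤ) - 1) : ℝ) - (p ((k : ℤ) - 1) : ℝ)) := by
        linear_combination -E1
      have e2 : (s - (P ((k : ℤ) + 1) : ℝ)) * ((p (k : ℤ) : ℝ) + s * (q (k : ℤ) : ℝ))
          = (Q ((k : ℤ) + 1) : ℝ) * ((p ((k : ℤ) - 1) : ℝ) + s * (q ((k : ℤ) - 1) : ℝ)) := by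
        linear_combination E2
      have e12 : (((P ((k : ℤ) + 1) : ℝ) + s) * ((p (k : ℤ) : ℝ) - s * (q (k : ℤ) : ℝ)))
            * ((s - (P ((k : ℤ) + 1) : ℝ)) * ((p (k : ℤ) : ℝ) + s * (q (k : ℤ) : ℝ)))
          = ((Q ((k : ℤ) + 1) : ℝ) * (s * (q ((k : ℤ) - 1) : ℝ) - (p ((k : ℤ) - 1) : ℝ)))
            * ((Q ((k : ℤ) + 1) : ℝ) * ((p ((k : ℤ) - 1) : ℝ) + s * (q ((k : ℤ) - 1) : ℝ))) := by
        rw [e1, e2]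
      have hQQ' : ((Q ((k : ℤ) + 1) : ℝ)) * (Q (k : ℤ) : ℝ) = (N : ℝ) - (P ((k : ℤ) + 1) : ℝ) ^ 2 := by
        exact_mod_cast hQrec (k : ℤ) h0k
      have hQkne : ((Q (k : ℤ) : ℝ)) ≠ 0 := ne_of_gt (by exact_mod_cast hQpos (k : ℤ) h0k)
      have hQ1ne : ((Q ((k : ℤ) + 1) : ℝ)) ≠ 0 := ne_of_gt (by exact_mod_cast hQpos ((k : ℤ) + 1) (by omega))
      have keyG : ((Q ((k : ℤ) + 1) : ℝ) * (Q (k : ℤ) : ℝ))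
            * ((p (k : ℤ) : ℝ) ^ 2 - (N : ℝ) * ((q (k : ℤ) : ℝ)) ^ 2)
          = ((Q ((k : ℤ) + 1) : ℝ) * (Q (k : ℤ) : ℝ))
            * ((-1) ^ (k + 1) * ((Q ((k : ℤ) + 1)) : ℝ)) := by
        linear_combination e12
          + ((p (k : ℤ) : ℝ) ^ 2 - (N : ℝ) * ((q (k : ℤ) : ℝ)) ^ 2) * hQQ'
          + (-( (p (k : ℤ) : ℝ) ^ 2) + (N : ℝ) * ((q (k : ℤ) : ℝ)) ^ 2
              - ((P ((k : ℤ) + 1) : ℝ)) ^ 2 * ((q (k : ℤ) : ℝ)) ^ 2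
              + s ^ 2 * ((q (k : ℤ) : ℝ)) ^ 2
              + ((Q ((k : ℤ) + 1) : ℝ)) ^ 2 * ((q ((k : ℤ) - 1) : ℝ)) ^ 2) * hsq
          - ((Q ((k : ℤ) + 1) : ℝ)) ^ 2 * IH
      have hres := mul_left_cancel₀ (mul_ne_zero hQ1ne hQkne) keyG
      push_cast
      rw [show (k : ℤ) + 1 - 1 = (k : ℤ) from by ring]
      exact hres
  -- complete quotients
  set A : ℤ → ℝ := fun n => ((P n : ℝ) + s) / (Q n : ℝ) with hA_def
  have hA1 : ∀ n : ℤ, 1 ≤ n → 1 < A n := by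
    intro n hn
    obtain ⟨hQn, hPn, hPlt, hsum, hdiff⟩ := hred n hn
    have hQR : (0 : ℝ) < (Q n : ℝ) := by exact_mod_cast hQn
    rw [hA_def]
    exact (one_lt_div hQR).mpr (by linarith)
  have hA2 : ∀ n : ℤ, 1 ≤ n → A n < 2 * s := by
    intro n hn
    obtain ⟨hQn, hPn, hPlt, hsum, hdiff⟩ := hred n hn
    have hQR : (1 : ℝ) ≤ (Q n : ℝ) := by exact_mod_cast hQn
    have hPR : (0 : ℝ) < (P n : ℝ) := by exact_mod_cast hPn
    rw [hA_def]
    calc ((P n : ℝ) + s) / (Q n : ℝ) ≤ ((P n : ℝ) + s) := by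
          apply div_le_self (by linarith) hQR
      _ < 2 * s := by linarith
  have hArec' : ∀ n : ℤ, 1 ≤ n → A (n + 1) * (A n - (a n : ℝ)) = 1 := by
    intro n hn
    have h0n : (0 : ℤ) ≤ n := by linarith
    have hQn : (0 : ℝ) < (Q n : ℝ) := by exact_mod_cast hQpos n h0n
    have hQn1 : (0 : ℝ) < (Q (n + 1) : ℝ) := by exact_mod_cast hQpos (n + 1) (by linarith)
    have hP1' : ((P (n + 1) : ℝ)) = (a n : ℝ) * (Q n : ℝ) - (P n : ℝ) := by
      exact_mod_cast hPrec n h0n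
    have hQQ' : ((Q (n + 1) : ℝ)) * (Q n : ℝ) = (N : ℝ) - (P (n + 1) : ℝ) ^ 2 := by
      exact_mod_cast hQrec n h0n
    have hnum : ((P (n + 1) : ℝ) + s) * ((P n : ℝ) + s - (a n : ℝ) * (Q n : ℝ))
        = (Q (n + 1) : ℝ) * (Q n : ℝ) := by
      linear_combination hsq - hQQ' + ((P (n + 1) : ℝ) + s) * hP1'
    rw [hA_def]
    field_simp
    linear_combination hnum
  have hArec : ∀ n : ℤ, 1 ≤ n → A n = (a n : ℝ) + 1 / A (n + 1) := by
    intro n hn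
    have h1 := hArec' n hn
    have hAne : A (n + 1) ≠ 0 := ne_of_gt (by linarith [hA1 (n + 1) (by linarith)])
    have h2 : A n - (a n : ℝ) = 1 / A (n + 1) := by
      rw [eq_div_iff hAne]; linear_combination h1
    linarith [h2]
  -- the contraction argument: A (1+τ) = A 1
  have hτ1 : (1 : ℤ) ≤ (τ : ℤ) := by exact_mod_cast hτ
  have hzstep : ∀ n : ℤ, 1 ≤ n →
      (A n - A (n + τ)) * (A (n + 1) * A (n + 1 + τ)) = -(A (n + 1) - A (n + 1 + τ)) := by
    intro n hn
    have hx := hArec n hn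
    have hy := hArec (n + τ) (by linarith)
    rw [hper n hn] at hy
    rw [show n + (τ : ℤ) + 1 = n + 1 + τ from by ring] at hy
    have hxne : A (n + 1) ≠ 0 := ne_of_gt (by linarith [hA1 (n + 1) (by linarith)])
    have hyne : A (n + 1 + τ) ≠ 0 := ne_of_gt (by linarith [hA1 (n + 1 + τ) (by linarith)])
    rw [hx, hy]
    field_simp
    ring
  have hpair : ∀ n : ℤ, 1 ≤ n → 2 ≤ A n * A (n + 1) := by
    intro n hn
    have h1 := hArec' n hn
    have h2 := hA1 (n + 1) (by linarith)
    have h3 : (1 : ℝ) ≤ (a n : ℝ) := by exact_mod_cast ham n (by linarith)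
    nlinarith [mul_nonneg (by linarith : (0:ℝ) ≤ (a n : ℝ) - 1) (by linarith : (0:ℝ) ≤ A (n + 1) - 1)]
  have htwo : ∀ n : ℤ, 1 ≤ n → 4 * |A n - A (n + τ)| ≤ |A (n + 2) - A (n + 2 + τ)| := by
    intro n hn
    have h1 := hzstep n hn
    have h2 := hzstep (n + 1) (by linarith)
    rw [show n + 1 + 1 = n + 2 from by ring] at h2
    have hw : (A n - A (n + τ)) * ((A (n + 1) * A (n + 1 + τ)) * (A (n + 2) * A (n + 2 + τ)))
        = A (n + 2) - A (n + 2 + τ) := by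
      have : (-(A (n + 1) - A (n + 1 + τ))) * (A (n + 2) * A (n + 2 + τ))
          = A (n + 2) - A (n + 2 + τ) := by linear_combination -h2
      calc (A n - A (n + τ)) * ((A (n + 1) * A (n + 1 + τ)) * (A (n + 2) * A (n + 2 + τ)))
          = ((A n - A (n + τ)) * (A (n + 1) * A (n + 1 + τ))) * (A (n + 2) * A (n + 2 + τ)) := by ring
        _ = (-(A (n + 1) - A (n + 1 + τ))) * (A (n + 2) * A (n + 2 + τ)) := by rw [h1]
        _ = A (n + 2) - A (n + 2 + τ) := this
    have hfac : (4 : ℝ) ≤ (A (n + 1) * A (n + 1 + τ)) * (A (n + 2) * A (n + 2 + τ)) := by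
      have ha1 := hpair (n + 1) (by linarith)
      have ha2 := hpair (n + 1 + τ) (by linarith)
      rw [show n + 1 + (τ:ℤ) + 1 = n + 2 + τ from by ring] at ha2
      rw [show n + 1 + 1 = n + 2 from by ring] at ha1
      nlinarith [ha1, ha2]
    calc 4 * |A n - A (n + τ)|
        ≤ |A n - A (n + τ)| * ((A (n + 1) * A (n + 1 + τ)) * (A (n + 2) * A (n + 2 + τ))) := by
          nlinarith [abs_nonneg (A n - A (n + τ))]
      _ = |A n - A (n + τ)| * |(A (n + 1) * A (n + 1 + τ)) * (A (n + 2) * A (n + 2 + τ))| := by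
          rw [abs_of_nonneg (by linarith : (0:ℝ) ≤ (A (n + 1) * A (n + 1 + τ)) * (A (n + 2) * A (n + 2 + τ)))]
      _ = |(A n - A (n + τ)) * ((A (n + 1) * A (n + 1 + τ)) * (A (n + 2) * A (n + 2 + τ)))| := by
          rw [← abs_mul]
      _ = |A (n + 2) - A (n + 2 + τ)| := by rw [hw]
  have hiter : ∀ j : ℕ, 4 ^ j * |A 1 - A (1 + τ)| ≤ |A (1 + 2 * j) - A (1 + 2 * j + τ)| := by
    intro j
    induction j with
    | zero => simp
    | succ j IH =>
      have hj1 : (1 : ℤ) ≤ 1 + 2 * (j : ℤ) := by omega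
      have h2 := htwo (1 + 2 * (j : ℤ)) hj1
      rw [show (1 : ℤ) + 2 * (j : ℤ) + 2 = 1 + 2 * ((j : ℤ) + 1) from by ring] at h2
      have : (4 : ℝ) ^ (j + 1) * |A 1 - A (1 + τ)| = 4 * (4 ^ j * |A 1 - A (1 + τ)|) := by ring
      rw [this]
      push_cast
      push_cast at IH h2
      calc (4:ℝ) * (4 ^ j * |A 1 - A (1 + (τ:ℤ))|) ≤ 4 * |A (1 + 2 * (j:ℤ)) - A (1 + 2 * (j:ℤ) + τ)| := by
            linarith [IH]
        _ ≤ |A (1 + 2 * ((j:ℤ) + 1)) - A (1 + 2 * ((j:ℤ) + 1) + τ)| := h2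
  have hzbound : ∀ n : ℤ, 1 ≤ n → |A n - A (n + τ)| ≤ 4 * s := by
    intro n hn
    have h1 := hA1 n hn
    have h2 := hA2 n hn
    have h3 := hA1 (n + τ) (by linarith)
    have h4 := hA2 (n + τ) (by linarith)
    rw [abs_le]
    constructor <;> nlinarith
  have hAeq : A 1 = A (1 + τ) := by
    by_contra hne
    have habs : 0 < |A 1 - A (1 + τ)| := abs_pos.mpr (sub_ne_zero.mpr hne)
    obtain ⟨j, hj⟩ := pow_unbounded_of_one_lt ((4 * s) / |A 1 - A (1 + τ)|) (by norm_num : (1:ℝ) < 4)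
    have h5 : 4 * s < 4 ^ j * |A 1 - A (1 + τ)| := by
      rw [div_lt_iff₀ habs] at hj
      linarith [hj]
    have h6 := hiter j
    have h7 := hzbound (1 + 2 * (j : ℤ)) (by omega)
    linarith
  -- equality of P, Q at 1 and 1+τ
  have hQ1pos : 0 < Q 1 := hQpos 1 (by norm_num)
  have hQτ1pos : 0 < Q (1 + τ) := hQpos (1 + τ) (by omega)
  have hPQper : P (1 + τ) = P 1 ∧ Q (1 + τ) = Q 1 := by
    have hcross : ((P 1 : ℝ) + s) * (Q (1 + τ) : ℝ) = ((P (1 + τ) : ℝ) + s) * (Q 1 : ℝ) := by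
      have hq1R : ((Q 1 : ℝ)) ≠ 0 := by exact_mod_cast hQ1pos.ne'
      have hq2R : ((Q (1 + τ) : ℝ)) ≠ 0 := by exact_mod_cast hQτ1pos.ne'
      have := hAeq
      rw [hA_def] at this
      field_simp at this
      linarith [this]
    have hl := hlin (P 1 * Q (1 + τ) - P (1 + τ) * Q 1) (Q (1 + τ) - Q 1)
      (by push_cast; linarith [hcross])
    have hd := hl.2
    have hQeq : Q (1 + τ) = Q 1 := by omega
    have hc := hl.1
    rw [hQeq] at hc
    have hPeq : P (1 + τ) = P 1 := by
      have h2 : P 1 * Q 1 = P (1 + τ) * Q 1 := by linarith [hc]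
      exact mul_right_cancel₀ hQ1pos.ne' h2.symm
    exact ⟨hPeq, hQeq⟩
  have hP1a : P 1 = a 0 := by
    have := hPrec 0 le_rfl; rw [hP0, hQ0] at this; simpa using this
  have hQ1N : Q 1 = (N : ℤ) - a 0 ^ 2 := by
    have := hQrec 0 le_rfl; rw [hQ0] at this; rw [zero_add, hP1a] at this; simpa using this
  have hQτ : Q (τ : ℤ) = 1 := by
    have h1 := hQrec (τ : ℤ) (by omega)
    rw [show (τ : ℤ) + 1 = 1 + τ from by ring] at h1
    rw [hPQper.1, hPQper.2, hP1a] at h1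
    -- Q 1 * Q τ = N - a0^2 = Q 1
    have h2 : Q 1 * Q (τ : ℤ) = Q 1 := by rw [h1, ← hQ1N]
    have := mul_left_cancel₀ hQ1pos.ne' (by rw [h2, mul_one] : Q 1 * Q (τ:ℤ) = Q 1 * 1)
    exact this
  have hPτa : P (τ : ℤ) = a 0 := by
    obtain ⟨hQn, hPn, hPlt, hsum, hdiff⟩ := hred (τ : ℤ) hτ1
    rw [hQτ] at hsum
    obtain ⟨hw1, hw2⟩ := hfl 0 le_rfl hQ0pos
    rw [hP0, hQ0] at hw1 hw2
    push_cast at hw1 hw2 hsum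
    -- a 0 < s < a 0 + 1 and s - 1 < P τ < s
    have h1 : ((a 0 : ℝ)) - 1 < (P (τ : ℤ) : ℝ) := by linarith
    have h2 : (P (τ : ℤ) : ℝ) < (a 0 : ℝ) + 1 := by linarith
    have h1' : a 0 - 1 < P (τ : ℤ) := by exact_mod_cast h1
    have h2' : P (τ : ℤ) < a 0 + 1 := by exact_mod_cast h2
    omega
  -- window lemma: a j = floor (Q (j+1) / (s - P (j+1))) for j ≥ 1
  have hwin : ∀ j : ℤ, 1 ≤ j →
      ((a j : ℝ) < (Q (j + 1) : ℝ) / (s - (P (j + 1) : ℝ)) ∧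
        (Q (j + 1) : ℝ) / (s - (P (j + 1) : ℝ)) < (a j : ℝ) + 1) := by
    intro j hj
    obtain ⟨hQj, hPj, hPjlt, hsumj, hdiffj⟩ := hred j hj
    obtain ⟨hQj1, hPj1, hPj1lt, hsumj1, hdiffj1⟩ := hred (j + 1) (by linarith)
    have hQjR : (0 : ℝ) < (Q j : ℝ) := by exact_mod_cast hQj
    have hQj1R : (0 : ℝ) < (Q (j + 1) : ℝ) := by exact_mod_cast hQj1
    have hPj1R : ((P (j + 1) : ℝ)) < s := by exact_mod_cast hPj1lt
    have hs1j : (0 : ℝ) < s - (P (j + 1) : ℝ) := by linarith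
    have hP1' : ((P (j + 1) : ℝ)) = (a j : ℝ) * (Q j : ℝ) - (P j : ℝ) := by
      exact_mod_cast hPrec j (by linarith)
    have hQQ' : ((Q (j + 1) : ℝ)) * (Q j : ℝ) = (N : ℝ) - (P (j + 1) : ℝ) ^ 2 := by
      exact_mod_cast hQrec j (by linarith)
    have heq2 : (Q (j + 1) : ℝ) * (Q j : ℝ)
        = ((a j : ℝ) * (Q j : ℝ) + s - (P j : ℝ)) * (s - (P (j + 1) : ℝ)) := by
      linear_combination hQQ' - hsq + (s - (P (j + 1) : ℝ)) * hP1'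
    have heq : (Q (j + 1) : ℝ) / (s - (P (j + 1) : ℝ))
        = (a j : ℝ) + (s - (P j : ℝ)) / (Q j : ℝ) := by
      have h7 : (a j : ℝ) + (s - (P j : ℝ)) / (Q j : ℝ)
          = ((a j : ℝ) * (Q j : ℝ) + s - (P j : ℝ)) / (Q j : ℝ) := by
        field_simp
        ring
      rw [h7, div_eq_div_iff (ne_of_gt hs1j) (ne_of_gt hQjR)]
      linear_combination heq2
    have hb1 : (0 : ℝ) < (s - (P j : ℝ)) / (Q j : ℝ) := div_pos (by linarith) hQjR
    have hb2 : (s - (P j : ℝ)) / (Q j : ℝ) < 1 := (div_lt_one hQjR).mpr (by linarith)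
    rw [heq]
    constructor <;> linarith
  -- palindromic symmetry
  have hsym : ∀ m : ℤ, 0 ≤ m → (m + 1 ≤ (τ : ℤ) →
      (P (m + 1) = P ((τ : ℤ) - m) ∧ Q m = Q ((τ : ℤ) - m))) := by
    refine fun m hm => Int.le_induction
      (motive := fun k _ => k + 1 ≤ (τ : ℤ) → (P (k + 1) = P ((τ : ℤ) - k) ∧ Q k = Q ((τ : ℤ) - k))) ?_ ?_ m hm
    · intro _
      rw [zero_add, sub_zero, hP1a, hPτa, hQ0, hQτ]
      exact ⟨rfl, rfl⟩
    · intro n hn IH hle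
      obtain ⟨hPeq, hQeq⟩ := IH (by linarith)
      have hj1 : (1 : ℤ) ≤ (τ : ℤ) - n - 1 := by linarith
      have hQn : 0 < Q n := hQpos n (by linarith)
      have hQnne : Q n ≠ 0 := hQn.ne'
      -- Q equality
      have hq1 := hQrec n (by linarith)
      have hq2 := hQrec ((τ : ℤ) - n - 1) (by linarith)
      rw [show (τ : ℤ) - n - 1 + 1 = (τ : ℤ) - n from by ring] at hq2
      rw [← hPeq, ← hQeq] at hq2
      -- hq2 : Q n * Q (τ - n - 1)... careful: it's Q (τ-n) * Q (τ-n-1) = N - P(τ-n)^2,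
      -- after rw: Q n * Q (τ-n-1) = N - P (n+1)^2
      have hQgoal : Q (n + 1) = Q ((τ : ℤ) - n - 1) := by
        have h3 : Q (n + 1) * Q n = Q n * Q ((τ : ℤ) - n - 1) := by rw [hq1, ← hq2]
        have h4 : Q n * Q (n + 1) = Q n * Q ((τ : ℤ) - n - 1) := by linarith [h3]
        exact mul_left_cancel₀ hQnne h4
      -- a equality
      have hQ1pos' : 0 < Q (n + 1) := hQpos (n + 1) (by linarith)
      have hQ1R : (0 : ℝ) < (Q (n + 1) : ℝ) := by exact_mod_cast hQ1pos'
      obtain ⟨hQx, hPx, hPxlt, hsumx, hdiffx⟩ := hred (n + 1) (by linarith)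
      have hPxR : ((P (n + 1) : ℝ)) < s := by exact_mod_cast hPxlt
      have hsP : (0 : ℝ) < s - (P (n + 1) : ℝ) := by linarith
      have hQQ' : ((Q (n + 1) : ℝ)) * (Q n : ℝ) = (N : ℝ) - (P (n + 1) : ℝ) ^ 2 := by
        exact_mod_cast hQrec n (by linarith)
      have hx : ((P (n + 1) : ℝ) + s) / (Q (n + 1) : ℝ) = (Q n : ℝ) / (s - (P (n + 1) : ℝ)) := by
        rw [div_eq_div_iff (ne_of_gt hQ1R) (ne_of_gt hsP)]
        linear_combination hsq - hQQ'
      obtain ⟨hw1, hw2⟩ := hfl (n + 1) (by linarith) hQ1pos'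
      have hxl : (a (n + 1) : ℝ) < (Q n : ℝ) / (s - (P (n + 1) : ℝ)) := by
        rw [← hx]
        exact (lt_div_iff₀ hQ1R).mpr hw1
      have hxr : (Q n : ℝ) / (s - (P (n + 1) : ℝ)) < (a (n + 1) : ℝ) + 1 := by
        rw [← hx]
        rw [div_lt_iff₀ hQ1R]
        linarith [hw2]
      obtain ⟨hyl, hyr⟩ := hwin ((τ : ℤ) - n - 1) hj1
      rw [show (τ : ℤ) - n - 1 + 1 = (τ : ℤ) - n from by ring, ← hPeq, ← hQeq] at hyl hyr
      have haeq : a (n + 1) = a ((τ : ℤ) - n - 1) := by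
        have h5 : ((a (n + 1) : ℝ)) - 1 < (a ((τ : ℤ) - n - 1) : ℝ) := by linarith
        have h6 : ((a ((τ : ℤ) - n - 1) : ℝ)) - 1 < (a (n + 1) : ℝ) := by linarith
        have h5' : a (n + 1) - 1 < a ((τ : ℤ) - n - 1) := by exact_mod_cast h5
        have h6' : a ((τ : ℤ) - n - 1) - 1 < a (n + 1) := by exact_mod_cast h6
        omega
      -- P equality
      have hp1 := hPrec (n + 1) (by linarith)
      have hp2 := hPrec ((τ : ℤ) - n - 1) (by linarith)
      rw [show (τ : ℤ) - n - 1 + 1 = (τ : ℤ) - n from by ring] at hp2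
      rw [← hPeq] at hp2
      -- hp2 : P (n+1) = a (τ-n-1) * Q (τ-n-1) - P (τ-n-1)
      have hPgoal : P (n + 2) = P ((τ : ℤ) - n - 1) := by
        rw [show n + 2 = n + 1 + 1 from by ring, hp1, haeq, hQgoal]
        omega
      constructor
      · rw [show n + 1 + 1 = n + 2 from by ring, show (τ : ℤ) - (n + 1) = (τ : ℤ) - n - 1 from by ring]
        exact hPgoal
      · rw [show (τ : ℤ) - (n + 1) = (τ : ℤ) - n - 1 from by ring]
        exact hQgoal
  -- final assembly
  have hterm : ∀ i : ℕ, (0:ℝ) < (s + (P ((i:ℤ)+1) : ℝ)) / (s - (P ((i:ℤ)+1) : ℝ)) := by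
    intro i
    obtain ⟨hQx, hPx, hPxlt, _, _⟩ := hred ((i:ℤ)+1) (by omega)
    have h1 : (0:ℝ) < (P ((i:ℤ)+1) : ℝ) := by exact_mod_cast hPx
    exact div_pos (by linarith) (by linarith)
  have hτ0 : (0:ℤ) ≤ (τ:ℤ) - 1 := by omega
  obtain ⟨hpτ, hqτ, -, -⟩ := hpq ((τ:ℤ) - 1) hτ0
  have hpR : (1:ℝ) ≤ (p ((τ:ℤ)-1) : ℝ) := by exact_mod_cast hpτ
  have hqR : (1:ℝ) ≤ (q ((τ:ℤ)-1) : ℝ) := by exact_mod_cast hqτ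
  have hXpos : (0:ℝ) < (p ((τ:ℤ)-1) : ℝ) + (q ((τ:ℤ)-1) : ℝ) * s := by nlinarith
  have hones : ((-1:ℝ))^τ = 1 := Even.neg_one_pow hτeven
  have hGτ := hG τ
  rw [hQτ, hones] at hGτ
  push_cast at hGτ
  -- hGτ : p² − N q² = 1
  have hnorm1 : ((p ((τ:ℤ)-1) : ℝ) - (q ((τ:ℤ)-1) : ℝ) * s) * ((p ((τ:ℤ)-1) : ℝ) + (q ((τ:ℤ)-1) : ℝ) * s) = 1 := by
    linear_combination hGτ - ((q ((τ:ℤ)-1) : ℝ))^2 * hsq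
  have hFτ' := hF τ
  rw [hones, one_mul] at hFτ'
  have hPRD : (∏ i ∈ Finset.range τ, ((s + (P ((i:ℤ)+1) : ℝ)) / (s - (P ((i:ℤ)+1) : ℝ))))
      = ((p ((τ:ℤ)-1) : ℝ) + (q ((τ:ℤ)-1) : ℝ) * s)^2 := by
    linear_combination ((p ((τ:ℤ)-1) : ℝ) + (q ((τ:ℤ)-1) : ℝ) * s) * hFτ'
      - (∏ i ∈ Finset.range τ, ((s + (P ((i:ℤ)+1) : ℝ)) / (s - (P ((i:ℤ)+1) : ℝ)))) * hnorm1
  have hfirst : ∑ i ∈ Finset.range τ,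
      (1/2:ℝ) * Real.log ((s + (P ((i:ℤ)+1) : ℝ)) / (s - (P ((i:ℤ)+1) : ℝ)))
      = Real.log ((p ((τ:ℤ)-1) : ℝ) + (q ((τ:ℤ)-1) : ℝ) * s) := by
    rw [← Finset.mul_sum, ← Real.log_prod (fun i _ => (hterm i).ne'), hPRD, Real.log_pow]
    push_cast
    ring
  constructor
  · exact hfirst
  · obtain ⟨h, hh⟩ := hτeven
    have hd2 : τ / 2 = h := by omega
    have hswap : ∀ i : ℕ, i < τ → P (((τ - 1 - i : ℕ) : ℤ) + 1) = P ((i:ℤ)+1) := by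
      intro i hi
      have hidx : ((τ - 1 - i : ℕ) : ℤ) + 1 = (τ:ℤ) - i := by omega
      rw [hidx]
      exact ((hsym (i:ℤ) (by omega) (by omega)).1).symm
    set f : ℕ → ℝ := fun i =>
      (1/2:ℝ) * Real.log ((s + (P ((i:ℤ)+1) : ℝ)) / (s - (P ((i:ℤ)+1) : ℝ))) with hf_def
    have e2 : ∑ i ∈ Finset.range (h + h), f i
        = (∑ i ∈ Finset.range h, f i) + ∑ i ∈ Finset.range h, f (h + i) :=
      Finset.sum_range_add f h h
    have e3 : ∑ i ∈ Finset.range h, f (h + i) = ∑ i ∈ Finset.range h, f i := by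
      rw [← Finset.sum_range_reflect (fun i => f (h + i)) h]
      apply Finset.sum_congr rfl
      intro i hi
      have hi' : i < h := Finset.mem_range.mp hi
      have hidx : h + (h - 1 - i) = τ - 1 - i := by omega
      rw [hidx, hf_def]
      simp only []
      rw [hswap i (by omega)]
    have e4 : ∑ i ∈ Finset.range τ, f i = 2 * ∑ i ∈ Finset.range (τ/2), f i := by
      rw [hd2, hh, e2, e3]
      ring
    have e5 : ∑ i ∈ Finset.range (τ/2), f i
        = (1/2:ℝ) * ∑ i ∈ Finset.range τ, f i := by
      rw [e4]; ring
    rw [e5, hfirst]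
end

section
/- Suppose the period τ is odd. Then the total infrastructural distance over one period of the principal cycle satisfies Σ_{i=1}^{2τ} (1/2)·ln((√N + P_i)/(√N − P_i)) = ln(p_{2τ−1} + q_{2τ−1}√N), and Σ_{i=1}^{τ} (1/2)·ln((√N + P_i)/(√N − P_i)) = (1/2)·ln(p_{2τ−1} + q_{2τ−1}√N). -/
/-!
For `m ≥ 1` the forms `(P m, Q m)` are reduced, i.e. `P m < √N` and `√N - P m < Q m < √N + P m`.
There are finitely many reduced forms and each one determines its successor and its predecessor,
so the principal cycle returns to a form with `Q = 1`. Among reduced forms, `Q m = 1` is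
equivalent to `a m = 2 ⌊√N⌋`; since `a` is periodic both with period `τ` and with the return time
of the cycle, this gives `Q τ = 1`, and then `(P m, Q m)` itself has period `τ`.

With `θ k = p (k - 1) + q (k - 1) √N` one has `θ (k + 1) (√N - P (k + 1)) = θ k Q (k + 1)`, which
together with `Q (k + 1) Q k = N - P (k + 1) ^ 2` makes the distance to the `k`-th form telescope
to `log θ k - ½ log Q k`. At `k = 2τ`, where `Q = 1`, this is the first formula, and by the
periodicity of `P` the distance over `2τ` steps is twice the distance over `τ` steps.
-/

open Real Finset

structure IsSqrtCF (N : ℕ) (a P Q : ℤ → ℤ) : Prop where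
  P_zero : P 0 = 0
  Q_zero : Q 0 = 1
  a_eq : ∀ m : ℤ, 0 ≤ m → a m = ⌊((P m : ℝ) + √N) / (Q m : ℝ)⌋
  P_succ : ∀ m : ℤ, 0 ≤ m → P (m + 1) = a m * Q m - P m
  Q_succ_mul : ∀ m : ℤ, 0 ≤ m → Q (m + 1) * Q m = (N : ℤ) - P (m + 1) ^ 2

structure IsConvergents (a p q : ℤ → ℤ) : Prop where
  p_neg_one : p (-1) = 1
  p_zero : p 0 = a 0
  q_neg_one : q (-1) = 0
  q_zero : q 0 = 1
  p_eq : ∀ m : ℤ, 1 ≤ m → p m = a m * p (m - 1) + p (m - 2)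
  q_eq : ∀ m : ℤ, 1 ≤ m → q m = a m * q (m - 1) + q (m - 2)

/-- `(P + √N) / Q` is a reduced quadratic irrational: it exceeds `1` and its conjugate lies in
`(-1, 0)`. -/
def IsReducedForm (N : ℕ) (P Q : ℤ) : Prop :=
  (P : ℝ) < √N ∧ √N - P < Q ∧ (Q : ℝ) < P + √N

noncomputable def convergentValue (N : ℕ) (p q : ℤ → ℤ) (k : ℕ) : ℝ :=
  p (k - 1) + q (k - 1) * √N

noncomputable def infraDist (N : ℕ) (P : ℤ → ℤ) (k : ℕ) : ℝ :=
  ∑ i ∈ range k, (1 / 2 : ℝ) * log ((√N + P (i + 1)) / (√N - P (i + 1)))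

section Periodic

variable {α : Type*} {f : ℤ → α} {c : ℤ}

theorem apply_add_mul_eq_of_periodic_from {T : ℕ} (hf : ∀ n, c ≤ n → f (n + T) = f n)
    (k : ℕ) {n : ℤ} (hn : c ≤ n) : f (n + k * T) = f n := by
  induction k with
  | zero => simp
  | succ k ih =>
    have hkT : (0 : ℤ) ≤ k * T := by positivity
    rw [Nat.cast_succ, add_one_mul, ← add_assoc, hf _ (by linarith), ih]

theorem apply_eq_of_periodic_from {S T : ℕ} (hS : ∀ n, c ≤ n → f (n + S) = f n)
    (hT : ∀ n, c ≤ n → f (n + T) = f n) (hcS : c ≤ S) (hcT : c ≤ T) : f S = f T := by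
  have hST : (0 : ℤ) ≤ S * T := by positivity
  calc f S = f (S + T * S) := (apply_add_mul_eq_of_periodic_from hS T hcS).symm
    _ = f (S + T * S + T) := (hT _ (by linarith)).symm
    _ = f (T + S * T + S) := by congr 1; ring
    _ = f (T + S * T) := hS _ (by linarith)
    _ = f T := apply_add_mul_eq_of_periodic_from hT S hcT

end Periodic

theorem one_le_sqrt_of_not_isSquare {N : ℕ} (hN : ¬IsSquare N) : 1 ≤ √(N : ℝ) := by
  have hN0 : N ≠ 0 := by rintro rfl; exact hN ⟨0, rfl⟩
  exact Real.one_le_sqrt.2 (by exact_mod_cast Nat.one_le_iff_ne_zero.2 hN0)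

theorem one_le_floor_sqrt {N : ℕ} (hN : ¬IsSquare N) : 1 ≤ ⌊√(N : ℝ)⌋ :=
  Int.le_floor.2 (by simpa using one_le_sqrt_of_not_isSquare hN)

namespace IsReducedForm

variable {N : ℕ} {P Q : ℤ}

theorem P_pos (h : IsReducedForm N P Q) : 0 < P := by
  have : (0 : ℝ) < P := by linarith [h.2.1, h.2.2]
  exact_mod_cast this

theorem Q_pos (h : IsReducedForm N P Q) : 0 < Q := by
  have : (0 : ℝ) < Q := by linarith [h.1, h.2.1]
  exact_mod_cast this

theorem le_floor (h : IsReducedForm N P Q) : P ≤ ⌊√(N : ℝ)⌋ :=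
  Int.le_floor.2 h.1.le

theorem Q_le (h : IsReducedForm N P Q) : Q ≤ 2 * ⌊√(N : ℝ)⌋ := by
  have hP : (P : ℝ) ≤ ⌊√(N : ℝ)⌋ := by exact_mod_cast h.le_floor
  have : (Q : ℝ) < 2 * ⌊√(N : ℝ)⌋ + 1 := by linarith [h.2.2, Int.lt_floor_add_one √(N : ℝ)]
  have : Q < 2 * ⌊√(N : ℝ)⌋ + 1 := by exact_mod_cast this
  omega

theorem eq_floor_of_Q_eq_one (h : IsReducedForm N P Q) (hQ : Q = 1) : P = ⌊√(N : ℝ)⌋ := by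
  have := h.2.1
  rw [hQ, Int.cast_one] at this
  exact (Int.floor_eq_iff.2 ⟨h.1.le, by linarith⟩).symm

end IsReducedForm

namespace IsConvergents

variable {N : ℕ} {a p q : ℤ → ℤ}

theorem convergentValue_zero (hc : IsConvergents a p q) : convergentValue N p q 0 = 1 := by
  simp [convergentValue, hc.p_neg_one, hc.q_neg_one]

theorem convergentValue_one (hc : IsConvergents a p q) : convergentValue N p q 1 = a 0 + √N := by
  simp [convergentValue, hc.p_zero, hc.q_zero]

theorem convergentValue_add_two (hc : IsConvergents a p q) (k : ℕ) :
    convergentValue N p q (k + 2) =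
      a (k + 1) * convergentValue N p q (k + 1) + convergentValue N p q k := by
  have hp := hc.p_eq (k + 1) (by omega)
  have hq := hc.q_eq (k + 1) (by omega)
  rw [add_sub_cancel_right, show (k : ℤ) + 1 - 2 = k - 1 by ring] at hp hq
  simp only [convergentValue]
  rw [show ((k + 2 : ℕ) : ℤ) - 1 = k + 1 by push_cast; ring,
    show ((k + 1 : ℕ) : ℤ) - 1 = k by push_cast; ring, hp, hq]
  push_cast
  ring

end IsConvergents

namespace IsSqrtCF

variable {N : ℕ} {a P Q p q : ℤ → ℤ} {m m' : ℤ}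

theorem a_zero (h : IsSqrtCF N a P Q) : a 0 = ⌊√(N : ℝ)⌋ := by
  simpa [h.P_zero, h.Q_zero] using h.a_eq 0 le_rfl

theorem P_one (h : IsSqrtCF N a P Q) : P 1 = ⌊√(N : ℝ)⌋ := by
  simpa [h.P_zero, h.Q_zero, h.a_zero] using h.P_succ 0 le_rfl

theorem Q_succ_mul_real (h : IsSqrtCF N a P Q) (hm : 0 ≤ m) :
    (Q (m + 1) : ℝ) * Q m = (√N - P (m + 1)) * (√N + P (m + 1)) := by
  have e : (Q (m + 1) : ℝ) * Q m = N - P (m + 1) ^ 2 := by exact_mod_cast h.Q_succ_mul m hm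
  linear_combination e - Real.sq_sqrt (Nat.cast_nonneg N)

theorem isReduced_succ (h : IsSqrtCF N a P Q) (hN : ¬IsSquare N) (hm : 0 ≤ m) (hQ : 0 < Q m)
    (hP : (P m : ℝ) < √N) (ha : 1 ≤ a m) : IsReducedForm N (P (m + 1)) (Q (m + 1)) := by
  have hQr : (0 : ℝ) < Q m := by exact_mod_cast hQ
  have har : (1 : ℝ) ≤ a m := by exact_mod_cast ha
  have hP' : (P (m + 1) : ℝ) = a m * Q m - P m := by exact_mod_cast h.P_succ m hm
  have hlo : (a m : ℝ) * Q m ≤ P m + √N := by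
    rw [← le_div_iff₀ hQr, h.a_eq m hm]; exact Int.floor_le _
  have hhi : (P m : ℝ) + √N < (a m + 1) * Q m := by
    rw [← div_lt_iff₀ hQr, h.a_eq m hm]; exact Int.lt_floor_add_one _
  have h1 : (P (m + 1) : ℝ) < √N :=
    lt_of_le_of_ne (by linarith) ((irrational_sqrt_natCast_iff.2 hN).ne_int _).symm
  have h2 : √N - P (m + 1) < Q m := by linarith
  have h3 : (Q m : ℝ) < √N + P (m + 1) := by nlinarith
  have hQQ := h.Q_succ_mul_real hm
  refine ⟨h1, lt_of_mul_lt_mul_right ?_ hQr.le, lt_of_mul_lt_mul_right ?_ hQr.le⟩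
  · rw [hQQ]; exact mul_lt_mul_of_pos_left h3 (sub_pos.2 h1)
  · rw [hQQ, add_comm (P _ : ℝ), mul_comm]; exact mul_lt_mul_of_pos_left h2 (by linarith)

theorem isReduced (h : IsSqrtCF N a P Q) (hN : ¬IsSquare N) (hm : 1 ≤ m) :
    IsReducedForm N (P m) (Q m) := by
  induction m, hm using Int.leInduction with
  | base =>
    have hs : (0 : ℝ) < √N := by linarith [one_le_sqrt_of_not_isSquare hN]
    simpa using h.isReduced_succ hN le_rfl (by simp [h.Q_zero]) (by simpa [h.P_zero] using hs)
      (h.a_zero ▸ one_le_floor_sqrt hN)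
  | succ m hm ih =>
    refine h.isReduced_succ hN (m := m) (by omega) ih.Q_pos ih.1 ?_
    rw [h.a_eq m (by omega)]
    refine Int.le_floor.2 ?_
    rw [Int.cast_one, one_le_div (by exact_mod_cast ih.Q_pos)]
    exact ih.2.2.le


theorem Q_pos (h : IsSqrtCF N a P Q) (hN : ¬IsSquare N) (hm : 0 ≤ m) : 0 < Q m := by
  rcases hm.eq_or_lt with rfl | hm
  · simp [h.Q_zero]
  · exact (h.isReduced hN hm).Q_pos

theorem a_eq_of_pair_eq (h : IsSqrtCF N a P Q) (hm : 0 ≤ m) (hm' : 0 ≤ m')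
    (he : (P m, Q m) = (P m', Q m')) : a m = a m' := by
  obtain ⟨hP, hQ⟩ := Prod.mk_inj.1 he
  rw [h.a_eq m hm, h.a_eq m' hm', hP, hQ]

theorem pair_succ_eq (h : IsSqrtCF N a P Q) (hN : ¬IsSquare N) (hm : 0 ≤ m) (hm' : 0 ≤ m')
    (he : (P m, Q m) = (P m', Q m')) : (P (m + 1), Q (m + 1)) = (P (m' + 1), Q (m' + 1)) := by
  obtain ⟨hP, hQ⟩ := Prod.mk_inj.1 he
  have hP' : P (m + 1) = P (m' + 1) := by
    rw [h.P_succ m hm, h.P_succ m' hm', h.a_eq_of_pair_eq hm hm' he, hP, hQ]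
  refine Prod.ext hP' (mul_right_cancel₀ (h.Q_pos hN hm).ne' ?_)
  rw [h.Q_succ_mul m hm, hP', ← h.Q_succ_mul m' hm', hQ]

theorem Q_eq_of_succ (h : IsSqrtCF N a P Q) (hN : ¬IsSquare N) (hm : 0 ≤ m) (hm' : 0 ≤ m')
    (he : (P (m + 1), Q (m + 1)) = (P (m' + 1), Q (m' + 1))) : Q m = Q m' := by
  obtain ⟨hP, hQ⟩ := Prod.mk_inj.1 he
  refine mul_left_cancel₀ (h.Q_pos hN (m := m + 1) (by omega)).ne' ?_
  rw [h.Q_succ_mul m hm, hP, ← h.Q_succ_mul m' hm', hQ]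

/-- `P m` is the unique integer in `(√N - Q m, √N)` congruent to `-P (m + 1)` modulo `Q m`. -/
theorem pair_eq_of_succ (h : IsSqrtCF N a P Q) (hN : ¬IsSquare N) (hm : 1 ≤ m) (hm' : 1 ≤ m')
    (he : (P (m + 1), Q (m + 1)) = (P (m' + 1), Q (m' + 1))) : (P m, Q m) = (P m', Q m') := by
  have hQ := h.Q_eq_of_succ hN (by omega) (by omega) he
  have hdvd : Q m ∣ P m - P m' :=
    ⟨a m - a m', by
      linear_combination h.P_succ m (by omega) - h.P_succ m' (by omega) - (Prod.mk_inj.1 he).1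
        + a m' * hQ⟩
  have hr := h.isReduced hN hm
  have hr' := h.isReduced hN hm'
  rw [← hQ] at hr'
  have habs : |(P m : ℝ) - P m'| < Q m := by
    rw [abs_sub_lt_iff]; constructor <;> linarith [hr.1, hr.2.1, hr'.1, hr'.2.1]
  exact Prod.ext (sub_eq_zero.1 (Int.eq_zero_of_abs_lt_dvd hdvd (by exact_mod_cast habs))) hQ

theorem pair_add_eq_of_one (h : IsSqrtCF N a P Q) (hN : ¬IsSquare N) {T : ℕ}
    (he : (P (1 + T), Q (1 + T)) = (P 1, Q 1)) (hm : 1 ≤ m) :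
    (P (m + T), Q (m + T)) = (P m, Q m) := by
  induction m, hm using Int.leInduction with
  | base => exact he
  | succ m hm ih => rw [add_right_comm]; exact h.pair_succ_eq hN (by omega) (by omega) ih

theorem pair_one_add_eq (h : IsSqrtCF N a P Q) (hN : ¬IsSquare N) {T : ℕ} (hm : 1 ≤ m)
    (he : (P (m + T), Q (m + T)) = (P m, Q m)) : (P (1 + T), Q (1 + T)) = (P 1, Q 1) := by
  induction m, hm using Int.leInduction with
  | base => exact he
  | succ m hm ih => exact ih (h.pair_eq_of_succ hN (by omega) hm (by rwa [add_right_comm]))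

/-- The reduced forms are bounded, so the cycle `m ↦ (P m, Q m)` repeats, and as it can be run
backwards it returns to `(P 1, Q 1)`; the preceding form then has `Q = Q 0 = 1`. -/
theorem exists_Q_eq_one (h : IsSqrtCF N a P Q) (hN : ¬IsSquare N) : ∃ T : ℕ, 0 < T ∧ Q T = 1 := by
  obtain ⟨i, j, hij, he⟩ := Set.Finite.exists_lt_map_eq_of_forall_mem
    (f := fun n : ℕ => (P (n + 1), Q (n + 1)))
    (t := Set.Icc 1 ⌊√(N : ℝ)⌋ ×ˢ Set.Icc 1 (2 * ⌊√(N : ℝ)⌋))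
    (fun n => have hr := h.isReduced hN (m := n + 1) (by omega)
      ⟨⟨hr.P_pos, hr.le_floor⟩, ⟨hr.Q_pos, hr.Q_le⟩⟩)
    ((Set.finite_Icc _ _).prod (Set.finite_Icc _ _))
  have hj : ((i : ℤ) + 1) + (j - i : ℕ) = (j : ℤ) + 1 := by omega
  have hcycle := h.pair_one_add_eq hN (m := i + 1) (T := j - i) (by omega)
    (by rw [hj]; exact he.symm)
  refine ⟨j - i, by omega, ?_⟩
  rw [← h.Q_zero]
  refine h.Q_eq_of_succ hN (by omega) le_rfl ?_
  rw [add_comm, zero_add]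
  exact hcycle

theorem a_eq_two_mul_floor_iff (h : IsSqrtCF N a P Q) (hN : ¬IsSquare N) (hm : 1 ≤ m) :
    a m = 2 * ⌊√(N : ℝ)⌋ ↔ Q m = 1 := by
  have hr := h.isReduced hN hm
  constructor
  · intro ha
    by_contra hQ
    have hQ2 : (2 : ℝ) ≤ Q m := by have := hr.Q_pos; exact_mod_cast (by omega : 2 ≤ Q m)
    have hfl : (1 : ℝ) ≤ ⌊√(N : ℝ)⌋ := by exact_mod_cast one_le_floor_sqrt hN
    have hlo : (a m : ℝ) * Q m ≤ P m + √N := by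
      rw [← le_div_iff₀ (by linarith), h.a_eq m (by omega)]; exact Int.floor_le _
    rw [ha, Int.cast_mul, Int.cast_ofNat] at hlo
    nlinarith [hr.1, Int.lt_floor_add_one √(N : ℝ)]
  · intro hQ
    rw [h.a_eq m (by omega), hQ, hr.eq_floor_of_Q_eq_one hQ, Int.cast_one, div_one,
      Int.floor_intCast_add]
    ring

theorem pair_succ_eq_one_of_Q_eq_one (h : IsSqrtCF N a P Q) (hN : ¬IsSquare N) (hm : 1 ≤ m)
    (hQ : Q m = 1) : (P (m + 1), Q (m + 1)) = (P 1, Q 1) := by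
  have hP : P (m + 1) = P 1 := by
    rw [h.P_succ m (by omega), (h.a_eq_two_mul_floor_iff hN hm).2 hQ, hQ,
      (h.isReduced hN hm).eq_floor_of_Q_eq_one hQ, h.P_one]
    ring
  have e := h.Q_succ_mul m (by omega)
  have e0 := h.Q_succ_mul 0 le_rfl
  rw [hQ, hP, mul_one] at e
  rw [h.Q_zero, mul_one, zero_add] at e0
  exact Prod.ext hP (e.trans e0.symm)

theorem pair_add_eq_of_Q_eq_one (h : IsSqrtCF N a P Q) (hN : ¬IsSquare N) {T : ℕ} (hQ : Q T = 1)
    (hm : 1 ≤ m) : (P (m + T), Q (m + T)) = (P m, Q m) := by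
  rcases T.eq_zero_or_pos with rfl | hT
  · simp
  · exact h.pair_add_eq_of_one hN
      (by rw [add_comm]; exact h.pair_succ_eq_one_of_Q_eq_one hN (by omega) hQ) hm

theorem Q_eq_one_of_period (h : IsSqrtCF N a P Q) (hN : ¬IsSquare N) {τ : ℕ}
    (hper : ∀ n : ℤ, 1 ≤ n → a (n + τ) = a n) : Q τ = 1 := by
  rcases τ.eq_zero_or_pos with rfl | hτ
  · exact h.Q_zero
  obtain ⟨T, hT, hQT⟩ := h.exists_Q_eq_one hN
  have haT : ∀ n : ℤ, 1 ≤ n → a (n + T) = a n := fun n hn =>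
    h.a_eq_of_pair_eq (by omega) (by omega) (h.pair_add_eq_of_Q_eq_one hN hQT hn)
  rw [← h.a_eq_two_mul_floor_iff hN (by omega),
    apply_eq_of_periodic_from hper haT (by omega) (by omega),
    h.a_eq_two_mul_floor_iff hN (by omega)]
  exact hQT

theorem convergentValue_succ_mul (h : IsSqrtCF N a P Q) (hN : ¬IsSquare N)
    (hc : IsConvergents a p q) (k : ℕ) :
    convergentValue N p q (k + 1) * (√N - P (k + 1)) = convergentValue N p q k * Q (k + 1) := by
  induction k with
  | zero =>
    have e := h.Q_succ_mul_real (m := 0) le_rfl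
    rw [zero_add, h.Q_zero, Int.cast_one, mul_one, h.P_one] at e
    rw [Nat.cast_zero, zero_add, zero_add, hc.convergentValue_one, hc.convergentValue_zero, h.P_one,
      h.a_zero, e]
    ring
  | succ k ih =>
    have hQ : (0 : ℝ) < Q (k + 1) := by exact_mod_cast h.Q_pos hN (m := k + 1) (by omega)
    have hP : (P (k + 1 + 1) : ℝ) = a (k + 1) * Q (k + 1) - P (k + 1) := by
      exact_mod_cast h.P_succ (k + 1) (by omega)
    have hQQ := h.Q_succ_mul_real (m := k + 1) (by omega)
    refine mul_right_cancel₀ hQ.ne' ?_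
    push_cast
    linear_combination (√N - P (k + 1 + 1)) * Q (k + 1) * hc.convergentValue_add_two k
      - (√N - P (k + 1 + 1)) * ih - convergentValue N p q (k + 1) * (√N - P (k + 1 + 1)) * hP
      - convergentValue N p q (k + 1) * hQQ

theorem convergentValue_pos (h : IsSqrtCF N a P Q) (hN : ¬IsSquare N)
    (hc : IsConvergents a p q) (k : ℕ) : 0 < convergentValue N p q k := by
  induction k with
  | zero => rw [hc.convergentValue_zero]; exact one_pos
  | succ k ih =>
    have hr := h.isReduced hN (m := k + 1) (by omega)
    have hQ : (0 : ℝ) < Q (k + 1) := by exact_mod_cast hr.Q_pos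
    refine pos_of_mul_pos_left ?_ (sub_pos.2 hr.1).le
    rw [h.convergentValue_succ_mul hN hc k]
    exact mul_pos ih hQ

theorem half_log_ratio_eq (h : IsSqrtCF N a P Q) (hN : ¬IsSquare N) (hc : IsConvergents a p q)
    (k : ℕ) :
    (1 / 2 : ℝ) * log ((√N + P (k + 1)) / (√N - P (k + 1))) =
      (log (convergentValue N p q (k + 1)) - 1 / 2 * log (Q (k + 1))) -
        (log (convergentValue N p q k) - 1 / 2 * log (Q k)) := by
  have hr := h.isReduced hN (m := k + 1) (by omega)
  have hsub : 0 < √N - P (k + 1) := sub_pos.2 hr.1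
  have hadd : 0 < √N + P (k + 1) := by
    have : (0 : ℝ) < P (k + 1) := by exact_mod_cast hr.P_pos
    positivity
  have hQ1 : (0 : ℝ) < Q (k + 1) := by exact_mod_cast hr.Q_pos
  have hQ0 : (0 : ℝ) < Q k := by exact_mod_cast h.Q_pos hN (m := k) (by omega)
  have hx0 := h.convergentValue_pos hN hc k
  have hx1 := h.convergentValue_pos hN hc (k + 1)
  have e1 : log (convergentValue N p q (k + 1)) + log (√N - P (k + 1)) =
      log (convergentValue N p q k) + log (Q (k + 1)) := by
    rw [← log_mul hx1.ne' hsub.ne', ← log_mul hx0.ne' hQ1.ne', h.convergentValue_succ_mul hN hc k]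
  have e2 : log (√N - P (k + 1)) + log (√N + P (k + 1)) = log (Q (k + 1)) + log (Q k) := by
    rw [← log_mul hsub.ne' hadd.ne', ← log_mul hQ1.ne' hQ0.ne', h.Q_succ_mul_real (by omega)]
  rw [log_div hadd.ne' hsub.ne']
  linarith

theorem infraDist_eq (h : IsSqrtCF N a P Q) (hN : ¬IsSquare N) (hc : IsConvergents a p q)
    (k : ℕ) : infraDist N P k = log (convergentValue N p q k) - 1 / 2 * log (Q k) := by
  set g : ℕ → ℝ := fun k => log (convergentValue N p q k) - 1 / 2 * log (Q k)
  calc infraDist N P k = ∑ i ∈ range k, (g (i + 1) - g i) :=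
        sum_congr rfl fun i _ => by simpa only [g, Nat.cast_succ] using h.half_log_ratio_eq hN hc i
    _ = g k - g 0 := sum_range_sub g k
    _ = g k := by simp [g, hc.convergentValue_zero, h.Q_zero]

end IsSqrtCF

theorem infraDist_add_of_periodic {N : ℕ} {P : ℤ → ℤ} {τ : ℕ}
    (hP : ∀ m : ℤ, 1 ≤ m → P (m + τ) = P m) (k : ℕ) :
    infraDist N P (τ + k) = infraDist N P τ + infraDist N P k := by
  simp only [infraDist]
  rw [sum_range_add]
  congr 1
  refine sum_congr rfl fun i _ => ?_
  rw [show ((τ + i : ℕ) : ℤ) + 1 = (i + 1) + τ by push_cast; ring, hP _ (by omega)]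

theorem stmt_18_general
    (N : ℕ) (hNsq : ¬ IsSquare N)
    (a P Q : ℤ → ℤ)
    (hP0 : P 0 = 0) (hQ0 : Q 0 = 1)
    (ha : ∀ m : ℤ, 0 ≤ m → a m = ⌊((P m : ℝ) + Real.sqrt N) / (Q m : ℝ)⌋)
    (hPrec : ∀ m : ℤ, 0 ≤ m → P (m + 1) = a m * Q m - P m)
    (hQrec : ∀ m : ℤ, 0 ≤ m → Q (m + 1) * Q m = (N : ℤ) - P (m + 1) ^ 2)
    (τ : ℕ)
    (hper : ∀ n : ℤ, 1 ≤ n → a (n + τ) = a n)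
    (p q : ℤ → ℤ)
    (hp1 : p (-1) = 1) (hp0 : p 0 = a 0)
    (hq1 : q (-1) = 0) (hq0 : q 0 = 1)
    (hprec : ∀ m : ℤ, 1 ≤ m → p m = a m * p (m - 1) + p (m - 2))
    (hqrec : ∀ m : ℤ, 1 ≤ m → q m = a m * q (m - 1) + q (m - 2))
    :
    (∑ i ∈ Finset.range (2 * τ),
        (1 / 2 : ℝ) * Real.log ((Real.sqrt N + (P ((i : ℤ) + 1) : ℝ))
          / (Real.sqrt N - (P ((i : ℤ) + 1) : ℝ))))
        = Real.log ((p (2 * (τ : ℤ) - 1) : ℝ) + (q (2 * (τ : ℤ) - 1) : ℝ) * Real.sqrt N)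
      ∧ (∑ i ∈ Finset.range τ,
        (1 / 2 : ℝ) * Real.log ((Real.sqrt N + (P ((i : ℤ) + 1) : ℝ))
          / (Real.sqrt N - (P ((i : ℤ) + 1) : ℝ))))
        = (1 / 2 : ℝ) * Real.log ((p (2 * (τ : ℤ) - 1) : ℝ) + (q (2 * (τ : ℤ) - 1) : ℝ) * Real.sqrt N) := by
  have h : IsSqrtCF N a P Q := ⟨hP0, hQ0, ha, hPrec, hQrec⟩
  have hc : IsConvergents a p q := ⟨hp1, hp0, hq1, hq0, hprec, hqrec⟩
  have hQτ : Q τ = 1 := h.Q_eq_one_of_period hNsq hper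
  have hQ2τ : Q (2 * τ : ℕ) = 1 := h.Q_eq_one_of_period hNsq fun n hn => by
    rw [Nat.cast_mul, Nat.cast_ofNat, two_mul, ← add_assoc, hper _ (by omega), hper n hn]
  have hPτ : ∀ m : ℤ, 1 ≤ m → P (m + τ) = P m := fun m hm =>
    (Prod.mk_inj.1 (h.pair_add_eq_of_Q_eq_one hNsq hQτ hm)).1
  have hdist : infraDist N P (2 * τ) = log (p (2 * τ - 1) + q (2 * τ - 1) * √N) := by
    rw [h.infraDist_eq hNsq hc, hQ2τ]
    simp [convergentValue]
  refine ⟨hdist, ?_⟩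
  rw [← hdist, two_mul, infraDist_add_of_periodic hPτ]
  change infraDist N P τ = _
  ring

theorem stmt_18
    (N : ℕ) (hN : 0 < N) (hNsq : ¬ IsSquare N)
    (a P Q : ℤ → ℤ)
    (hP0 : P 0 = 0) (hQ0 : Q 0 = 1)
    (ha : ∀ m : ℤ, 0 ≤ m → a m = ⌊((P m : ℝ) + Real.sqrt N) / (Q m : ℝ)⌋)
    (hPrec : ∀ m : ℤ, 0 ≤ m → P (m + 1) = a m * Q m - P m)
    (hQrec : ∀ m : ℤ, 0 ≤ m → Q (m + 1) * Q m = (N : ℤ) - P (m + 1) ^ 2)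
    (τ : ℕ) (hτ : 0 < τ)
    (hper : ∀ n : ℤ, 1 ≤ n → a (n + τ) = a n)
    (hmin : ∀ τ' : ℕ, 0 < τ' → (∀ n : ℤ, 1 ≤ n → a (n + τ') = a n) → τ ≤ τ')
    (p q : ℤ → ℤ)
    (hp1 : p (-1) = 1) (hp0 : p 0 = a 0)
    (hq1 : q (-1) = 0) (hq0 : q 0 = 1)
    (hprec : ∀ m : ℤ, 1 ≤ m → p m = a m * p (m - 1) + p (m - 2))
    (hqrec : ∀ m : ℤ, 1 ≤ m → q m = a m * q (m - 1) + q (m - 2))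
    (hτodd : Odd τ)
    :
    (∑ i ∈ Finset.range (2 * τ),
        (1 / 2 : ℝ) * Real.log ((Real.sqrt N + (P ((i : ℤ) + 1) : ℝ))
          / (Real.sqrt N - (P ((i : ℤ) + 1) : ℝ))))
        = Real.log ((p (2 * (τ : ℤ) - 1) : ℝ) + (q (2 * (τ : ℤ) - 1) : ℝ) * Real.sqrt N)
      ∧ (∑ i ∈ Finset.range τ,
        (1 / 2 : ℝ) * Real.log ((Real.sqrt N + (P ((i : ℤ) + 1) : ℝ))
          / (Real.sqrt N - (P ((i : ℤ) + 1) : ℝ))))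
        = (1 / 2 : ℝ) * Real.log ((p (2 * (τ : ℤ) - 1) : ℝ) + (q (2 * (τ : ℤ) - 1) : ℝ) * Real.sqrt N) :=
  stmt_18_general N hNsq a P Q hP0 hQ0 ha hPrec hQrec τ hper p q hp1 hp0 hq1 hq0 hprec hqrec
end

section
/- Suppose the period τ is odd. Then the distance to the target form satisfies the bound | Σ_{i=1}^{(τ−1)/2} (1/2)·ln((√N + P_i)/(√N − P_i)) − (1/4)·ln(p_{2τ−1} + q_{2τ−1}√N) | ≤ (1/4)·ln(4N). -/
/-!
Write `ξₙ = (Pₙ + √N) / Qₙ` for the complete quotients and `ηₙ = (√N + Pₙ₊₁) / Qₙ = -1 / ξ'ₙ₊₁` for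
those of the expansion read backwards. The convergents satisfy `pₙ₋₁ + qₙ₋₁ √N = η₀ ⋯ ηₙ₋₁`. The
`ξₙ` are `τ`-periodic, because two bounded expansions with the same partial quotients agree, and
the period is a palindrome: `ξᵢ₊₁ = ηⱼ` whenever `i + j + 1 = τ`. For `τ = 2k + 1`, pairing the
factors `ηᵢ` and `η₂ₖ₋ᵢ = ξᵢ₊₁` of `η₀ ⋯ η_{τ-1}` gives `(√N + Pᵢ₊₁) / (√N - Pᵢ₊₁)` and leaves only
the middle factor `ηₖ`, so the quantity to bound is `-(1/2) log ηₖ`, and `1 < ηₖ < 2√N`.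
-/

open Finset

lemma eq_of_intCast_add_inv_eq {c d : ℤ} {u v : ℝ} (hu : 1 < u) (hv : 1 < v)
    (h : (c : ℝ) + u⁻¹ = d + v⁻¹) : u = v := by
  have floor_eq : ∀ (e : ℤ) {w : ℝ}, 1 < w → ⌊(e : ℝ) + w⁻¹⌋ = e := fun e w hw ↦ by
    rw [Int.floor_intCast_add, Int.floor_eq_zero_iff.mpr
      ⟨by positivity, inv_lt_one_of_one_lt₀ hw⟩, add_zero]
  obtain rfl : c = d := by rw [← floor_eq c hu, h, floor_eq d hv]
  exact inv_injective (add_left_cancel h)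

lemma Irrational.eq_and_eq_of_add_div_eq {s : ℝ} (hs : Irrational s) {P₁ Q₁ P₂ Q₂ : ℤ}
    (hQ₁ : Q₁ ≠ 0) (hQ₂ : Q₂ ≠ 0) (h : (P₁ + s) / Q₁ = (P₂ + s) / Q₂) :
    P₁ = P₂ ∧ Q₁ = Q₂ := by
  rw [div_eq_div_iff (by exact_mod_cast hQ₁) (by exact_mod_cast hQ₂)] at h
  obtain rfl : Q₁ = Q₂ := by
    by_contra hne
    refine (hs.intCast_mul (sub_ne_zero.mpr (Ne.symm hne))).ne_int (P₂ * Q₁ - P₁ * Q₂) ?_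
    push_cast
    linarith
  have hQ₁' : (Q₁ : ℝ) ≠ 0 := by exact_mod_cast hQ₁
  exact ⟨by exact_mod_cast mul_right_cancel₀ hQ₁' (by linarith : (P₁ : ℝ) * Q₁ = P₂ * Q₁), rfl⟩

lemma two_lt_mul_succ_of_eq_add_inv {x c : ℕ → ℝ} (hc : ∀ n, 1 ≤ c n) (hx : ∀ n, 1 < x n)
    (hxc : ∀ n, x n = c n + (x (n + 1))⁻¹) (n : ℕ) : 2 < x n * x (n + 1) := by
  have hx' := hx (n + 1)
  have hmul : x n * x (n + 1) = c n * x (n + 1) + 1 := by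
    rw [hxc n, add_mul, inv_mul_cancel₀ (by positivity)]
  nlinarith [hc n]

/-- The gap between the two sequences is multiplied by more than `4` every two steps. -/
theorem eq_of_forall_eq_add_inv {x y c : ℕ → ℝ} {B : ℝ} (hc : ∀ n, 1 ≤ c n)
    (hx : ∀ n, 1 < x n) (hy : ∀ n, 1 < y n) (hxB : ∀ n, x n ≤ B) (hyB : ∀ n, y n ≤ B)
    (hxc : ∀ n, x n = c n + (x (n + 1))⁻¹) (hyc : ∀ n, y n = c n + (y (n + 1))⁻¹) :
    x 0 = y 0 := by
  have hgap : ∀ n, |x (n + 1) - y (n + 1)| = |x n - y n| * (x (n + 1) * y (n + 1)) := by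
    intro n
    have hx' := hx (n + 1)
    have hy' := hy (n + 1)
    rw [← abs_of_pos (by positivity : 0 < x (n + 1) * y (n + 1)), ← abs_mul, hxc n, hyc n,
      ← abs_neg]
    congr 1
    field_simp
    ring
  have hgrow : ∀ m, 4 ^ m * |x 0 - y 0| ≤ |x (2 * m) - y (2 * m)| := by
    intro m
    induction m with
    | zero => simp
    | succ m ih =>
      have hx2 := two_lt_mul_succ_of_eq_add_inv hc hx hxc (2 * m + 1)
      have hy2 := two_lt_mul_succ_of_eq_add_inv hc hy hyc (2 * m + 1)
      rw [show 2 * (m + 1) = 2 * m + 1 + 1 by ring, hgap, hgap, pow_succ]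
      nlinarith [abs_nonneg (x (2 * m) - y (2 * m)),
        mul_lt_mul'' hx2 hy2 (by norm_num) (by norm_num)]
  by_contra hne
  have hpos : 0 < |x 0 - y 0| := abs_pos.mpr (sub_ne_zero.mpr hne)
  obtain ⟨m, hm⟩ := pow_unbounded_of_one_lt (B / |x 0 - y 0|) (by norm_num : (1 : ℝ) < 4)
  rw [div_lt_iff₀ hpos] at hm
  have hgrow_m := hgrow m
  have hgap_lt : |x (2 * m) - y (2 * m)| < B := abs_sub_lt_iff.mpr
    ⟨by linarith [hy (2 * m), hxB (2 * m)], by linarith [hx (2 * m), hyB (2 * m)]⟩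
  linarith

/-- With `ξ = (P + s) / Q`, the invariant `0 < Q`, `P < s`, `Q < s + P` says that `ξ > 1` and that
its conjugate `(P - s) / Q` is negative; one step of the algorithm preserves it. -/
lemma reduced_step {s : ℝ} (hs : Irrational s) {P Q a P' Q' : ℤ} (hQ : 0 < Q) (hPs : (P : ℝ) < s)
    (hQs : (Q : ℝ) < s + P) (ha : a = ⌊(P + s) / Q⌋) (hP' : P' = a * Q - P)
    (hQ' : (Q' : ℝ) * Q = (s - P') * (s + P')) :
    0 < Q' ∧ (P' : ℝ) < s ∧ (Q' : ℝ) < s + P' ∧ (Q : ℝ) < s + P' := by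
  have hQr : (0 : ℝ) < Q := by exact_mod_cast hQ
  have hirr : Irrational ((P + s) / Q) := (hs.intCast_add P).div_intCast hQ.ne'
  have ha1 : (1 : ℝ) ≤ a := by
    rw [ha]
    exact_mod_cast Int.le_floor.mpr (by rw [Int.cast_one, le_div_iff₀ hQr]; linarith)
  have haξ : (a : ℝ) < (P + s) / Q :=
    ha ▸ (Int.floor_le _).lt_of_ne (hirr.ne_int _).symm
  have hξa : (P + s) / Q < a + 1 := ha ▸ Int.lt_floor_add_one _
  rw [lt_div_iff₀ hQr] at haξ
  rw [div_lt_iff₀ hQr] at hξa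
  have hP'r : (P' : ℝ) = a * Q - P := by exact_mod_cast hP'
  have hsub : 0 < s - P' := by rw [hP'r]; linarith
  have hsubQ : s - P' < Q := by rw [hP'r]; linarith
  have hadd : (Q : ℝ) < s + P' := by rw [hP'r]; nlinarith
  have hQ'pos : (0 : ℝ) < Q' := by
    have : (0 : ℝ) < Q' * Q := by rw [hQ']; nlinarith
    exact pos_of_mul_pos_left this hQr.le
  refine ⟨by exact_mod_cast hQ'pos, by linarith, ?_, hadd⟩
  nlinarith

structure SqrtCFExpansion (N : ℕ) (a P Q : ℕ → ℤ) : Prop where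
  not_isSquare : ¬ IsSquare N
  P_zero : P 0 = 0
  Q_zero : Q 0 = 1
  a_eq_floor : ∀ n, a n = ⌊((P n : ℝ) + √N) / Q n⌋
  P_succ : ∀ n, P (n + 1) = a n * Q n - P n
  Q_succ_mul : ∀ n, Q (n + 1) * Q n = N - P (n + 1) ^ 2

/-- `√N = [a₀; a₁, …, aₙ₋₁, compQuot N P Q n]`. -/
noncomputable def compQuot (N : ℕ) (P Q : ℕ → ℤ) (n : ℕ) : ℝ := (P n + √N) / Q n

/-- `revQuot N P Q n = (√N + Pₙ₊₁) / Qₙ = -1 / ξₙ₊₁'` (the prime is conjugation in `ℚ(√N)`):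
the complete quotients of the expansion read backwards. -/
noncomputable def revQuot (N : ℕ) (P Q : ℕ → ℤ) (n : ℕ) : ℝ := (√N + P (n + 1)) / Q n

namespace SqrtCFExpansion

variable {N : ℕ} {a P Q : ℕ → ℤ}
local notation "ξ" => compQuot N P Q
local notation "η" => revQuot N P Q

theorem irrational_sqrt (h : SqrtCFExpansion N a P Q) : Irrational √N :=
  irrational_sqrt_natCast_iff.mpr h.not_isSquare

theorem one_lt_sqrt (h : SqrtCFExpansion N a P Q) : 1 < √N := by
  have h0 : N ≠ 0 := by rintro rfl; exact h.not_isSquare ⟨0, rfl⟩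
  have h1 : N ≠ 1 := by rintro rfl; exact h.not_isSquare ⟨1, rfl⟩
  rw [Real.lt_sqrt zero_le_one]
  norm_cast
  omega

theorem Q_succ_mul_real (h : SqrtCFExpansion N a P Q) (n : ℕ) :
    (Q (n + 1) : ℝ) * Q n = (√N - P (n + 1)) * (√N + P (n + 1)) := by
  have := congrArg (Int.cast : ℤ → ℝ) (h.Q_succ_mul n)
  push_cast at this
  rw [this]
  linear_combination -Real.sq_sqrt (Nat.cast_nonneg (α := ℝ) N)

theorem reduced (h : SqrtCFExpansion N a P Q) (n : ℕ) :
    0 < Q n ∧ (P n : ℝ) < √N ∧ (Q n : ℝ) < √N + P n := by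
  induction n with
  | zero =>
    simp only [h.P_zero, h.Q_zero, Int.cast_zero, Int.cast_one, add_zero]
    exact ⟨one_pos, zero_lt_one.trans h.one_lt_sqrt, h.one_lt_sqrt⟩
  | succ n ih =>
    obtain ⟨hQ, hP, hQP, -⟩ := reduced_step h.irrational_sqrt ih.1 ih.2.1 ih.2.2
      (h.a_eq_floor n) (h.P_succ n) (h.Q_succ_mul_real n)
    exact ⟨hQ, hP, hQP⟩

theorem Q_pos (h : SqrtCFExpansion N a P Q) (n : ℕ) : 0 < Q n := (h.reduced n).1

theorem P_lt_sqrt (h : SqrtCFExpansion N a P Q) (n : ℕ) : (P n : ℝ) < √N := (h.reduced n).2.1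

theorem Q_lt_sqrt_add_P (h : SqrtCFExpansion N a P Q) (n : ℕ) : (Q n : ℝ) < √N + P n :=
  (h.reduced n).2.2

theorem Q_lt_sqrt_add_P_succ (h : SqrtCFExpansion N a P Q) (n : ℕ) :
    (Q n : ℝ) < √N + P (n + 1) :=
  (reduced_step h.irrational_sqrt (h.Q_pos n) (h.P_lt_sqrt n) (h.Q_lt_sqrt_add_P n)
    (h.a_eq_floor n) (h.P_succ n) (h.Q_succ_mul_real n)).2.2.2

theorem Q_pos_real (h : SqrtCFExpansion N a P Q) (n : ℕ) : (0 : ℝ) < Q n := by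
  exact_mod_cast h.Q_pos n

theorem compQuot_zero (h : SqrtCFExpansion N a P Q) : ξ 0 = √N := by
  simp [compQuot, h.P_zero, h.Q_zero]

theorem revQuot_zero (h : SqrtCFExpansion N a P Q) : η 0 = √N + a 0 := by
  simp [revQuot, h.P_succ, h.P_zero, h.Q_zero]

theorem one_lt_compQuot (h : SqrtCFExpansion N a P Q) (n : ℕ) : 1 < ξ n := by
  rw [compQuot, one_lt_div (h.Q_pos_real n)]
  linarith [h.Q_lt_sqrt_add_P n]

theorem one_lt_revQuot (h : SqrtCFExpansion N a P Q) (n : ℕ) : 1 < η n := by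
  rw [revQuot, one_lt_div (h.Q_pos_real n)]
  exact h.Q_lt_sqrt_add_P_succ n

theorem compQuot_lt (h : SqrtCFExpansion N a P Q) (n : ℕ) : ξ n < 2 * √N := by
  have hQ : (1 : ℝ) ≤ Q n := by exact_mod_cast h.Q_pos n
  calc ξ n ≤ P n + √N := div_le_self (by linarith [h.Q_lt_sqrt_add_P n]) hQ
    _ < 2 * √N := by linarith [h.P_lt_sqrt n]

theorem revQuot_lt (h : SqrtCFExpansion N a P Q) (n : ℕ) : η n < 2 * √N := by
  have hQ : (1 : ℝ) ≤ Q n := by exact_mod_cast h.Q_pos n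
  calc η n ≤ √N + P (n + 1) := div_le_self (by linarith [h.Q_lt_sqrt_add_P_succ n]) hQ
    _ < 2 * √N := by linarith [h.P_lt_sqrt (n + 1)]

theorem one_le_a (h : SqrtCFExpansion N a P Q) (n : ℕ) : 1 ≤ a n := by
  rw [h.a_eq_floor n, Int.le_floor, Int.cast_one]
  exact (h.one_lt_compQuot n).le

theorem inv_compQuot_succ (h : SqrtCFExpansion N a P Q) (n : ℕ) :
    (ξ (n + 1))⁻¹ = (√N - P (n + 1)) / Q n := by
  have hP : (0 : ℝ) < P (n + 1) + √N := by
    linarith [h.Q_lt_sqrt_add_P (n + 1), h.Q_pos_real (n + 1)]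
  rw [compQuot, inv_div, div_eq_div_iff hP.ne' (h.Q_pos_real n).ne']
  linear_combination h.Q_succ_mul_real n

theorem inv_revQuot (h : SqrtCFExpansion N a P Q) (n : ℕ) :
    (η n)⁻¹ = (√N - P (n + 1)) / Q (n + 1) := by
  have hP : (0 : ℝ) < √N + P (n + 1) := by
    linarith [h.Q_lt_sqrt_add_P_succ n, h.Q_pos_real n]
  rw [revQuot, inv_div, div_eq_div_iff hP.ne' (h.Q_pos_real (n + 1)).ne']
  linear_combination h.Q_succ_mul_real n

theorem compQuot_eq_add_inv (h : SqrtCFExpansion N a P Q) (n : ℕ) :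
    ξ n = a n + (ξ (n + 1))⁻¹ := by
  have hP : (P (n + 1) : ℝ) = a n * Q n - P n := by exact_mod_cast h.P_succ n
  rw [h.inv_compQuot_succ, hP, compQuot]
  field_simp [(h.Q_pos_real n).ne']
  ring

theorem revQuot_succ (h : SqrtCFExpansion N a P Q) (n : ℕ) :
    η (n + 1) = a (n + 1) + (η n)⁻¹ := by
  have hP : (P (n + 2) : ℝ) = a (n + 1) * Q (n + 1) - P (n + 1) := by
    exact_mod_cast h.P_succ (n + 1)
  rw [h.inv_revQuot, revQuot, hP]
  field_simp [(h.Q_pos_real (n + 1)).ne']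
  ring

theorem compQuot_mul_revQuot (h : SqrtCFExpansion N a P Q) (n : ℕ) :
    ξ (n + 1) * η n = (√N + P (n + 1)) / (√N - P (n + 1)) := by
  have hP : (0 : ℝ) < √N - P (n + 1) := by linarith [h.P_lt_sqrt (n + 1)]
  rw [compQuot, revQuot, div_mul_div_comm, div_eq_div_iff
    (mul_pos (h.Q_pos_real (n + 1)) (h.Q_pos_real n)).ne' hP.ne']
  linear_combination (-(√N + P (n + 1))) * h.Q_succ_mul_real n

theorem eq_prod_revQuot (h : SqrtCFExpansion N a P Q) {E : ℕ → ℝ} (h0 : E 0 = 1)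
    (h1 : E 1 = a 0 + √N) (hrec : ∀ n, E (n + 2) = a (n + 1) * E (n + 1) + E n) (n : ℕ) :
    E n = ∏ i ∈ range n, η i := by
  have hstep : ∀ n, E (n + 1) = η n * E n := by
    intro n
    induction n with
    | zero => rw [h1, h0, h.revQuot_zero, mul_one, add_comm]
    | succ n ih =>
      have hη := (zero_lt_one.trans (h.one_lt_revQuot n)).ne'
      rw [hrec, h.revQuot_succ, ih]
      field_simp
  induction n with
  | zero => rw [h0, prod_range_zero]
  | succ n ih => rw [hstep, ih, prod_range_succ, mul_comm]

section Periodic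

variable {τ : ℕ}

theorem compQuot_add_period (h : SqrtCFExpansion N a P Q)
    (hper : ∀ n, 1 ≤ n → a (n + τ) = a n) {n : ℕ} (hn : 1 ≤ n) : ξ (n + τ) = ξ n := by
  simpa using eq_of_forall_eq_add_inv (x := fun k ↦ ξ (n + τ + k)) (y := fun k ↦ ξ (n + k))
    (c := fun k ↦ (a (n + k) : ℝ)) (B := 2 * √N)
    (fun k ↦ by exact_mod_cast h.one_le_a (n + k))
    (fun k ↦ h.one_lt_compQuot _) (fun k ↦ h.one_lt_compQuot _)
    (fun k ↦ (h.compQuot_lt _).le) (fun k ↦ (h.compQuot_lt _).le)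
    (fun k ↦ by
      rw [add_right_comm, h.compQuot_eq_add_inv, hper _ (by omega), add_right_comm n k τ]
      rfl)
    (fun k ↦ h.compQuot_eq_add_inv _)

theorem P_add_period (h : SqrtCFExpansion N a P Q)
    (hper : ∀ n, 1 ≤ n → a (n + τ) = a n) {n : ℕ} (hn : 1 ≤ n) : P (n + τ) = P n :=
  (h.irrational_sqrt.eq_and_eq_of_add_div_eq (h.Q_pos _).ne' (h.Q_pos _).ne'
    (h.compQuot_add_period hper hn)).1

theorem Q_add_period (h : SqrtCFExpansion N a P Q)
    (hper : ∀ n, 1 ≤ n → a (n + τ) = a n) (n : ℕ) : Q (n + τ) = Q n := by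
  have hpos : ∀ n, 1 ≤ n → Q (n + τ) = Q n := fun n hn ↦
    (h.irrational_sqrt.eq_and_eq_of_add_div_eq (h.Q_pos _).ne' (h.Q_pos _).ne'
      (h.compQuot_add_period hper hn)).2
  rcases Nat.eq_zero_or_pos n with rfl | hn
  · have e := h.Q_succ_mul τ
    have e0 := h.Q_succ_mul 0
    rw [zero_add] at e0
    rw [add_comm τ 1, h.P_add_period hper le_rfl, hpos 1 le_rfl, ← e0] at e
    rw [zero_add]
    exact mul_left_cancel₀ (h.Q_pos 1).ne' e
  · exact hpos n hn

theorem revQuot_add_period (h : SqrtCFExpansion N a P Q)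
    (hper : ∀ n, 1 ≤ n → a (n + τ) = a n) (n : ℕ) : η (n + τ) = η n := by
  rw [revQuot, revQuot, add_right_comm, h.P_add_period hper (by omega), h.Q_add_period hper]

theorem compQuot_eq_revQuot (h : SqrtCFExpansion N a P Q)
    (hper : ∀ n, 1 ≤ n → a (n + τ) = a n) {i j : ℕ} (hij : i + j + 1 = τ) : ξ (i + 1) = η j := by
  induction i generalizing j with
  | zero =>
    refine eq_of_intCast_add_inv_eq (c := 2 * a 0) (d := a (j + 1))
      (h.one_lt_compQuot 1) (h.one_lt_revQuot j) ?_
    rw [← h.revQuot_succ, show j + 1 = 0 + τ by omega, h.revQuot_add_period hper,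
      h.revQuot_zero, ← h.compQuot_zero, h.compQuot_eq_add_inv 0]
    push_cast
    ring
  | succ i ih =>
    exact eq_of_intCast_add_inv_eq (h.one_lt_compQuot _) (h.one_lt_revQuot j) (by
      rw [← h.compQuot_eq_add_inv, ih (j := j + 1) (by omega), h.revQuot_succ])

theorem prod_revQuot_two_mul_period (h : SqrtCFExpansion N a P Q)
    (hper : ∀ n, 1 ≤ n → a (n + τ) = a n) :
    ∏ i ∈ range (2 * τ), η i = (∏ i ∈ range τ, η i) ^ 2 := by
  rw [two_mul, prod_range_add, sq]
  congr 1
  exact prod_congr rfl fun i _ ↦ by rw [add_comm, h.revQuot_add_period hper]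

theorem prod_revQuot_period_of_odd (h : SqrtCFExpansion N a P Q)
    (hper : ∀ n, 1 ≤ n → a (n + τ) = a n) {k : ℕ} (hk : τ = 2 * k + 1) :
    ∏ i ∈ range τ, η i = (∏ i ∈ range k, (√N + P (i + 1)) / (√N - P (i + 1))) * η k := by
  have hrefl : ∏ i ∈ range k, η (k + (i + 1)) = ∏ i ∈ range k, ξ (i + 1) := by
    rw [← prod_range_reflect]
    refine prod_congr rfl fun i hi ↦ ?_
    have := mem_range.mp hi
    exact (h.compQuot_eq_revQuot hper (by omega)).symm
  rw [hk, show 2 * k + 1 = k + (k + 1) by omega, prod_range_add, prod_range_succ', hrefl,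
    ← prod_congr rfl fun i _ ↦ h.compQuot_mul_revQuot i, prod_mul_distrib, add_zero]
  ring

theorem abs_sum_log_sub_log_prod_le (h : SqrtCFExpansion N a P Q)
    (hper : ∀ n, 1 ≤ n → a (n + τ) = a n) {k : ℕ} (hk : τ = 2 * k + 1) :
    |∑ i ∈ range k, 1 / 2 * Real.log ((√N + P (i + 1)) / (√N - P (i + 1)))
      - 1 / 4 * Real.log (∏ i ∈ range (2 * τ), η i)| ≤ 1 / 4 * Real.log (4 * N) := by
  have hr : ∀ i ∈ range k, (√N + P (i + 1)) / (√N - P (i + 1)) ≠ 0 := fun i _ ↦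
    div_ne_zero (by linarith [h.Q_lt_sqrt_add_P (i + 1), h.Q_pos_real (i + 1)])
      (by linarith [h.P_lt_sqrt (i + 1)])
  have hη := h.one_lt_revQuot k
  have hlog_η : Real.log (η k) ≤ Real.log (2 * √N) :=
    Real.log_le_log (by linarith) (h.revQuot_lt k).le
  have hlog_4N : Real.log (4 * N) = 2 * Real.log (2 * √N) := by
    rw [show (4 : ℝ) * N = (2 * √N) ^ 2 by rw [mul_pow, Real.sq_sqrt N.cast_nonneg]; norm_num,
      Real.log_pow, Nat.cast_ofNat]
  rw [h.prod_revQuot_two_mul_period hper, h.prod_revQuot_period_of_odd hper hk, Real.log_pow,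
    Real.log_mul (prod_ne_zero_iff.mpr hr) (by linarith), Real.log_prod hr, ← mul_sum, hlog_4N]
  have := Real.log_pos hη
  exact abs_sub_le_iff.mpr ⟨by push_cast; linarith, by push_cast; linarith⟩

end Periodic

end SqrtCFExpansion

theorem stmt_19_general
    (N : ℕ) (hNsq : ¬ IsSquare N)
    (a P Q : ℤ → ℤ)
    (hP0 : P 0 = 0) (hQ0 : Q 0 = 1)
    (ha : ∀ m : ℤ, 0 ≤ m → a m = ⌊((P m : ℝ) + Real.sqrt N) / (Q m : ℝ)⌋)
    (hPrec : ∀ m : ℤ, 0 ≤ m → P (m + 1) = a m * Q m - P m)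
    (hQrec : ∀ m : ℤ, 0 ≤ m → Q (m + 1) * Q m = (N : ℤ) - P (m + 1) ^ 2)
    (τ : ℕ)
    (hper : ∀ n : ℤ, 1 ≤ n → a (n + τ) = a n)
    (p q : ℤ → ℤ)
    (hp1 : p (-1) = 1) (hp0 : p 0 = a 0)
    (hq1 : q (-1) = 0) (hq0 : q 0 = 1)
    (hprec : ∀ m : ℤ, 1 ≤ m → p m = a m * p (m - 1) + p (m - 2))
    (hqrec : ∀ m : ℤ, 1 ≤ m → q m = a m * q (m - 1) + q (m - 2))
    (hτodd : Odd τ)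
    :
    |(∑ i ∈ Finset.range ((τ - 1) / 2),
        (1 / 2 : ℝ) * Real.log ((Real.sqrt N + (P ((i : ℤ) + 1) : ℝ))
          / (Real.sqrt N - (P ((i : ℤ) + 1) : ℝ))))
      - (1 / 4 : ℝ) * Real.log ((p (2 * (τ : ℤ) - 1) : ℝ) + (q (2 * (τ : ℤ) - 1) : ℝ) * Real.sqrt N)|
      ≤ (1 / 4 : ℝ) * Real.log (4 * (N : ℝ)) := by
  have h : SqrtCFExpansion N (fun n ↦ a n) (fun n ↦ P n) (fun n ↦ Q n) :=
    { not_isSquare := hNsq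
      P_zero := hP0
      Q_zero := hQ0
      a_eq_floor := fun n ↦ ha n n.cast_nonneg
      P_succ := fun n ↦ by exact_mod_cast hPrec n n.cast_nonneg
      Q_succ_mul := fun n ↦ by exact_mod_cast hQrec n n.cast_nonneg }
  have hper' : ∀ n : ℕ, 1 ≤ n → a ((n + τ : ℕ) : ℤ) = a n := fun n hn ↦ by
    exact_mod_cast hper n (by exact_mod_cast hn)
  obtain ⟨k, rfl⟩ := hτodd
  have hconv := h.eq_prod_revQuot (E := fun n ↦ p (n - 1) + q (n - 1) * √N)
    (by simp [hp1, hq1]) (by simp [hp0, hq0])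
    (fun n ↦ by
      push_cast
      rw [show (n : ℤ) + 2 - 1 = n + 1 by ring, hprec _ (by omega), hqrec _ (by omega),
        add_sub_cancel_right, show (n : ℤ) + 1 - 2 = n - 1 by ring]
      push_cast
      ring) (2 * (2 * k + 1))
  have hbound := h.abs_sum_log_sub_log_prod_le hper' rfl
  rw [← hconv] at hbound
  push_cast at hbound
  rwa [show (2 * k + 1 - 1) / 2 = k by omega]

theorem stmt_19
    (N : ℕ) (hN : 0 < N) (hNsq : ¬ IsSquare N)
    (a P Q : ℤ → ℤ)
    (hP0 : P 0 = 0) (hQ0 : Q 0 = 1)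
    (ha : ∀ m : ℤ, 0 ≤ m → a m = ⌊((P m : ℝ) + Real.sqrt N) / (Q m : ℝ)⌋)
    (hPrec : ∀ m : ℤ, 0 ≤ m → P (m + 1) = a m * Q m - P m)
    (hQrec : ∀ m : ℤ, 0 ≤ m → Q (m + 1) * Q m = (N : ℤ) - P (m + 1) ^ 2)
    (τ : ℕ) (hτ : 0 < τ)
    (hper : ∀ n : ℤ, 1 ≤ n → a (n + τ) = a n)
    (hmin : ∀ τ' : ℕ, 0 < τ' → (∀ n : ℤ, 1 ≤ n → a (n + τ') = a n) → τ ≤ τ')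
    (p q : ℤ → ℤ)
    (hp1 : p (-1) = 1) (hp0 : p 0 = a 0)
    (hq1 : q (-1) = 0) (hq0 : q 0 = 1)
    (hprec : ∀ m : ℤ, 1 ≤ m → p m = a m * p (m - 1) + p (m - 2))
    (hqrec : ∀ m : ℤ, 1 ≤ m → q m = a m * q (m - 1) + q (m - 2))
    (hτodd : Odd τ)
    :
    |(∑ i ∈ Finset.range ((τ - 1) / 2),
        (1 / 2 : ℝ) * Real.log ((Real.sqrt N + (P ((i : ℤ) + 1) : ℝ))
          / (Real.sqrt N - (P ((i : ℤ) + 1) : ℝ))))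
      - (1 / 4 : ℝ) * Real.log ((p (2 * (τ : ℤ) - 1) : ℝ) + (q (2 * (τ : ℤ) - 1) : ℝ) * Real.sqrt N)|
      ≤ (1 / 4 : ℝ) * Real.log (4 * (N : ℝ)) :=
  stmt_19_general N hNsq a P Q hP0 hQ0 ha hPrec hQrec τ hper p q hp1 hp0 hq1 hq0 hprec hqrec hτodd
end
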